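/- arXiv:2202.06103 — 6 statements merged into one kernel-verified Lean document; each statement's English description precedes it below -/
import Mathlib

section
/- Let R be a von Neumann regular ring, M and N finitely generated projective R-modules, and μ : N → M a nonzero R-module homomorphism. Then μ is von Neumann regular, i.e., there exists θ : M → N with μ ∘ θ ∘ μ = μ. -/
section Aux

variable {R : Type*} [Ring R]

private lemma aux_principal (hR : ∀ a : R, ∃ x : R, a * x * a = a) (a : R) :
    ∃ e x : R, e * e = e ∧ e = x * a ∧ a = a * e := by
  obtain ⟨x, hx⟩ := hR a
  refine ⟨x * a, x, ?_, rfl, ?_⟩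
  · rw [mul_assoc, ← mul_assoc a x a, hx]
  · rw [← mul_assoc, hx]

/-- Every finitely generated left ideal of a von Neumann regular ring is generated by
an idempotent. -/
private lemma aux_fg_ideal (hR : ∀ a : R, ∃ x : R, a * x * a = a)
    (I : Submodule R R) (hI : I.FG) :
    ∃ e : R, e * e = e ∧ I = Submodule.span R {e} := by
  refine Submodule.fg_induction (motive := fun J _ => ∃ e : R, e * e = e ∧ J = Submodule.span R {e})
    ?_ ?_ I hI
  · intro a
    obtain ⟨e, x, he, hex, hae⟩ := aux_principal hR a
    refine ⟨e, he, le_antisymm ?_ ?_⟩ <;>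
      rw [Submodule.span_le, Set.singleton_subset_iff, SetLike.mem_coe,
        Submodule.mem_span_singleton]
    · exact ⟨a, by rw [smul_eq_mul, ← hae]⟩
    · exact ⟨x, by rw [smul_eq_mul, ← hex]⟩
  · rintro I J _ _ ⟨e, he, rfl⟩ ⟨f, hf, rfl⟩
    set c : R := f - f * e with hc
    obtain ⟨g, x, hg, hgx, hcg⟩ := aux_principal hR c
    have hce : c * e = 0 := by rw [hc, sub_mul, mul_assoc, he, sub_self]
    have hge : g * e = 0 := by rw [hgx, mul_assoc, hce, mul_zero]
    set h : R := e + g - e * g with hh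
    have heh : e * h = e := by
      rw [hh, mul_sub, mul_add, ← mul_assoc, he, add_sub_cancel_right]
    have hgh : g * h = g := by
      rw [hh, mul_sub, mul_add, ← mul_assoc, hge, hg, zero_mul, zero_add, sub_zero]
    have hhh : h * h = h := by
      nth_rewrite 1 [hh]
      rw [sub_mul, add_mul, heh, hgh, mul_assoc, hgh, ← hh]
    refine ⟨h, hhh, le_antisymm (sup_le ?_ ?_) ?_⟩
    · rw [Submodule.span_le, Set.singleton_subset_iff, SetLike.mem_coe,
        Submodule.mem_span_singleton]
      exact ⟨e, by rw [smul_eq_mul, heh]⟩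
    · rw [Submodule.span_le, Set.singleton_subset_iff, SetLike.mem_coe,
        Submodule.mem_span_singleton]
      refine ⟨f * e + c * g, ?_⟩
      rw [smul_eq_mul, add_mul, mul_assoc, mul_assoc, heh, hgh, ← hcg, hc,
        add_sub_cancel]
    · rw [Submodule.span_le, Set.singleton_subset_iff, SetLike.mem_coe, hh]
      have hemem : e ∈ Submodule.span R {e} ⊔ Submodule.span R {f} :=
        Submodule.mem_sup_left (Submodule.mem_span_singleton_self e)
      have hfmem : f ∈ Submodule.span R {e} ⊔ Submodule.span R {f} :=
        Submodule.mem_sup_right (Submodule.mem_span_singleton_self f)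
      have hcmem : c ∈ Submodule.span R {e} ⊔ Submodule.span R {f} := by
        rw [hc]
        exact sub_mem hfmem (by simpa using Submodule.smul_mem _ f hemem)
      have hgmem : g ∈ Submodule.span R {e} ⊔ Submodule.span R {f} := by
        rw [hgx]; simpa using Submodule.smul_mem _ x hcmem
      exact sub_mem (add_mem hemem hgmem) (by simpa using Submodule.smul_mem _ e hgmem)

/-- The "summand" property for finitely generated submodules. -/
private def AuxGood (R : Type*) [Ring R] (M : Type*) [AddCommGroup M] [Module R M] : Prop :=
  ∀ S : Submodule R M, S.FG →
    ∃ r : M →ₗ[R] M, (∀ x ∈ S, r x = x) ∧ LinearMap.range r ≤ S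

private lemma aux_good_of_equiv {M M' : Type*} [AddCommGroup M] [Module R M]
    [AddCommGroup M'] [Module R M'] (E : M ≃ₗ[R] M') (hM : AuxGood R M) :
    AuxGood R M' := by
  intro S hS
  have hco : S.comap (E : M →ₗ[R] M') = S.map (E.symm : M' →ₗ[R] M) := by
    ext x
    constructor
    · intro hx; exact ⟨E x, hx, by simp⟩
    · rintro ⟨y, hy, rfl⟩; simpa using hy
  obtain ⟨r, hfix, hrange⟩ := hM (S.comap (E : M →ₗ[R] M')) (by rw [hco]; exact hS.map _)
  refine ⟨(E : M →ₗ[R] M') ∘ₗ r ∘ₗ (E.symm : M' →ₗ[R] M), ?_, ?_⟩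
  · intro x hx
    have : E.symm x ∈ S.comap (E : M →ₗ[R] M') := by simp [Submodule.mem_comap, hx]
    simp only [LinearMap.comp_apply, LinearEquiv.coe_coe]
    rw [hfix _ this]; simp
  · rintro y ⟨x, rfl⟩
    have : r (E.symm x) ∈ S.comap (E : M →ₗ[R] M') := hrange ⟨E.symm x, rfl⟩
    simpa [Submodule.mem_comap] using this

/-- The inductive step: `AuxGood` passes from `M` to `M × R` over a von Neumann regular
ring. -/
private lemma aux_good_step (hR : ∀ a : R, ∃ x : R, a * x * a = a)
    {M : Type*} [AddCommGroup M] [Module R M] (hM : AuxGood R M) :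
    AuxGood R (M × R) := by
  intro S hS
  set π : (M × R) →ₗ[R] R := LinearMap.snd R M R with hπ
  obtain ⟨e, he, hIe⟩ := aux_fg_ideal hR (S.map π) (hS.map π)
  have heI : e ∈ S.map π := by rw [hIe]; exact Submodule.mem_span_singleton_self e
  obtain ⟨s₀, hs₀S, hs₀⟩ := heI
  -- for x ∈ S, (π x) * e = π x
  have key : ∀ x ∈ S, π x * e = π x := by
    intro x hx
    have : π x ∈ S.map π := ⟨x, hx, rfl⟩
    rw [hIe, Submodule.mem_span_singleton] at this
    obtain ⟨z, hz⟩ := this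
    rw [← hz, smul_eq_mul, mul_assoc, he]
  -- t x = (π x * e) • s₀
  set t : (M × R) →ₗ[R] (M × R) :=
    (LinearMap.toSpanSingleton R (M × R) s₀) ∘ₗ (LinearMap.toSpanSingleton R R e) ∘ₗ π with ht
  have ht_apply : ∀ x, t x = (π x * e) • s₀ := by
    intro x; simp [ht, LinearMap.toSpanSingleton_apply, smul_eq_mul]
  set ψ : (M × R) →ₗ[R] (M × R) := LinearMap.id - t with hψ
  have hψ_apply : ∀ x, ψ x = x - (π x * e) • s₀ := by
    intro x; simp [hψ, ht_apply]
  have hψS : ∀ x ∈ S, ψ x ∈ S := by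
    intro x hx
    rw [hψ_apply]
    exact sub_mem hx (Submodule.smul_mem _ _ hs₀S)
  have hψsnd : ∀ x ∈ S, π (ψ x) = 0 := by
    intro x hx
    rw [hψ_apply, map_sub, map_smul, hs₀, smul_eq_mul, mul_assoc, he, key x hx, sub_self]
  -- S₀ : submodule of M
  set S₀ : Submodule R M := (S.map ψ).map (LinearMap.fst R M R) with hS₀
  have hS₀fg : S₀.FG := (hS.map ψ).map _
  have hS₀S : ∀ y ∈ S₀, ((y, 0) : M × R) ∈ S := by
    rintro y ⟨z, ⟨x, hx, rfl⟩, rfl⟩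
    have h2 : π (ψ x) = 0 := hψsnd x hx
    have : ψ x = ((ψ x).1, (0 : R)) := by
      ext
      · rfl
      · exact h2
    rw [LinearMap.fst_apply, ← this]
    exact hψS x hx
  obtain ⟨r₀, hr₀fix, hr₀range⟩ := hM S₀ hS₀fg
  set r : (M × R) →ₗ[R] (M × R) :=
    ((LinearMap.inl R M R) ∘ₗ r₀ ∘ₗ (LinearMap.fst R M R)) ∘ₗ ψ + t with hr
  refine ⟨r, ?_, ?_⟩
  · intro x hx
    have h1 : (ψ x).1 ∈ S₀ := ⟨ψ x, ⟨x, hx, rfl⟩, rfl⟩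
    have h2 : π (ψ x) = 0 := hψsnd x hx
    have h3 : r x = ((r₀ (ψ x).1, 0) : M × R) + t x := by
      simp [hr, LinearMap.inl_apply]
    rw [h3, hr₀fix _ h1]
    have h4 : (((ψ x).1, (0 : R)) : M × R) = ψ x := by
      ext
      · rfl
      · exact h2.symm
    rw [h4, hψ_apply, ht_apply]
    abel
  · rintro y ⟨x, rfl⟩
    have h3 : r x = ((r₀ (ψ x).1, 0) : M × R) + t x := by
      simp [hr, LinearMap.inl_apply]
    rw [h3, ht_apply]
    exact add_mem (hS₀S _ (hr₀range ⟨(ψ x).1, rfl⟩)) (Submodule.smul_mem _ _ hs₀S)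

private lemma aux_good_pi (hR : ∀ a : R, ∃ x : R, a * x * a = a) (m : ℕ) :
    AuxGood R (Fin m → R) := by
  induction m with
  | zero =>
    intro S _
    refine ⟨0, ?_, ?_⟩
    · intro x _; exact Subsingleton.elim _ _
    · rintro y ⟨x, rfl⟩
      simpa using (show (0 : Fin 0 → R) ∈ S from Subsingleton.elim (0 : Fin 0 → R) 0 ▸ S.zero_mem)
  | succ m ih =>
    exact aux_good_of_equiv
      ((LinearEquiv.prodCongr (LinearEquiv.refl R (Fin m → R)) (LinearEquiv.funUnique (Fin 1) R R).symm).trans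
        (((LinearEquiv.sumArrowLequivProdArrow (Fin m) (Fin 1) R R).symm).trans
          (LinearEquiv.funCongrLeft R R finSumFinEquiv.symm)))
      (aux_good_step hR ih)

/-- Linear maps between finite free modules over a von Neumann regular ring are regular. -/
private lemma aux_free_reg (hR : ∀ a : R, ∃ x : R, a * x * a = a) {n m : ℕ}
    (f : (Fin n → R) →ₗ[R] (Fin m → R)) :
    ∃ g : (Fin m → R) →ₗ[R] (Fin n → R), f ∘ₗ g ∘ₗ f = f := by
  have hfg : (LinearMap.range f).FG := by
    rw [← Submodule.map_top]
    exact (Module.Finite.fg_top (R := R) (M := Fin n → R)).map f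
  obtain ⟨r, hfix, hrange⟩ := aux_good_pi hR m (LinearMap.range f) hfg
  obtain ⟨g, hg⟩ := Module.projective_lifting_property f.rangeRestrict
    (r.codRestrict (LinearMap.range f) (fun x => hrange ⟨x, rfl⟩))
    f.surjective_rangeRestrict
  have hfg' : ∀ x, f (g x) = r x := by
    intro x
    have := congrArg (fun (h : (Fin m → R) →ₗ[R] LinearMap.range f) => (h x : Fin m → R)) hg
    simpa using this
  refine ⟨g, LinearMap.ext fun x => ?_⟩
  simp only [LinearMap.comp_apply]
  rw [hfg', hfix _ ⟨x, rfl⟩]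

end Aux

/-- Over a von Neumann regular ring `R`, a nonzero homomorphism `μ : N → M` of finitely
generated projective `R`-modules is von Neumann regular: there is `θ` with `μ ∘ θ ∘ μ = μ`. -/
theorem munn_vonNeumannRegular_hom
    {R M N : Type*} [Ring R] [AddCommGroup M] [AddCommGroup N]
    [Module R M] [Module R N]
    (hR : ∀ a : R, ∃ x : R, a * x * a = a)
    [Module.Finite R M] [Module.Projective R M]
    [Module.Finite R N] [Module.Projective R N]
    (μ : N →ₗ[R] M) (hμ : μ ≠ 0) :
    ∃ θ : M →ₗ[R] N, μ ∘ₗ θ ∘ₗ μ = μ := by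
  obtain ⟨m, ρM, ιM, _, _, hM⟩ := Module.Finite.exists_comp_eq_id_of_projective R M
  obtain ⟨n, ρN, ιN, _, _, hN⟩ := Module.Finite.exists_comp_eq_id_of_projective R N
  have hMid : ∀ z : M, ρM (ιM z) = z := fun z => LinearMap.congr_fun hM z
  have hNid : ∀ z : N, ρN (ιN z) = z := fun z => LinearMap.congr_fun hN z
  set A : (Fin n → R) →ₗ[R] (Fin m → R) := ιM ∘ₗ μ ∘ₗ ρN with hA
  obtain ⟨B, hB⟩ := aux_free_reg hR A
  have hBA : ∀ y, A (B (A y)) = A y := by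
    intro y
    have := LinearMap.congr_fun hB y
    simpa [LinearMap.comp_apply] using this
  refine ⟨ρN ∘ₗ B ∘ₗ ιM, LinearMap.ext fun x => ?_⟩
  simp only [LinearMap.comp_apply]
  have h1 : ιM (μ x) = A (ιN x) := by simp [hA, LinearMap.comp_apply, hNid]
  have h2 : ∀ y, μ (ρN y) = ρM (A y) := by
    intro y; simp [hA, LinearMap.comp_apply, hMid]
  rw [h1, h2, hBA, ← h2, hNid]
end

section
/- The Munn algebra 𝕄(R, M, N, μ) has a multiplicative unit if and only if there are direct sum decompositions M ≅ M₁ ⊕ M₂ and N ≅ N₁ ⊕ N₂ such that Hom_R(M₂, N) = 0, Hom_R(M, N₂) = 0, and the composition pr₁ ∘ μ restricted to N₁ is an isomorphism N₁ → M₁. In that case the unit is the map M → N given by the inverse of this isomorphism (extended by zero). -/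
section aux

variable {R M N : Type*} [Ring R] [AddCommGroup M] [AddCommGroup N]
    [Module R M] [Module R N]

private theorem munn_isCompl_range_ker (p : M →ₗ[R] M) (h : ∀ x, p (p x) = p x) :
    IsCompl (LinearMap.range p) (LinearMap.ker p) := by
  constructor
  · rw [disjoint_iff_inf_le]
    rintro x hx
    obtain ⟨⟨y, rfl⟩, hker⟩ := Submodule.mem_inf.1 hx
    have : p (p y) = 0 := hker
    simpa [h y] using this
  · rw [codisjoint_iff, eq_top_iff]
    intro x _
    have hx : x = p x + (x - p x) := by abel
    refine hx ▸ Submodule.add_mem_sup ⟨x, rfl⟩ ?_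
    simp [LinearMap.mem_ker, map_sub, h]

private theorem munn_proj_eq (p : M →ₗ[R] M) (h : ∀ x, p (p x) = p x)
    (h₁ : IsCompl (LinearMap.range p) (LinearMap.ker p)) (x : M) :
    (((LinearMap.range p).linearProjOfIsCompl (LinearMap.ker p) h₁) x : M) = p x := by
  have hx : x = ((⟨p x, ⟨x, rfl⟩⟩ : LinearMap.range p) : M) + (x - p x) := by simp
  conv_lhs => rw [hx]
  rw [Submodule.linearProjOfIsCompl, map_add, Submodule.linearProjOfIsCompl_apply_left,
    Submodule.projectionOnto_apply_of_mem_right h₁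
      (show x - p x ∈ LinearMap.ker p by simp [LinearMap.mem_ker, map_sub, h])]
  simp

private theorem munn_unit_aux (μ : N →ₗ[R] M)
    (M₁ M₂ : Submodule R M) (N₁ N₂ : Submodule R N) (h₁ : IsCompl M₁ M₂)
    (h₂ : IsCompl N₁ N₂) (e : N₁ ≃ₗ[R] M₁)
    (hM2 : ∀ f : M₂ →ₗ[R] N, f = 0) (hN2 : ∀ f : M →ₗ[R] N₂, f = 0)
    (he : (e : N₁ →ₗ[R] M₁) = (M₁.linearProjOfIsCompl M₂ h₁) ∘ₗ μ ∘ₗ N₁.subtype)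
    (a : M →ₗ[R] N) :
    ((N₁.subtype ∘ₗ (e.symm : M₁ →ₗ[R] N₁) ∘ₗ M₁.linearProjOfIsCompl M₂ h₁)
        ∘ₗ μ ∘ₗ a) = a ∧
    (a ∘ₗ μ ∘ₗ
      (N₁.subtype ∘ₗ (e.symm : M₁ →ₗ[R] N₁) ∘ₗ M₁.linearProjOfIsCompl M₂ h₁)) = a := by
  have he' : ∀ n : N₁, M₁.linearProjOfIsCompl M₂ h₁ (μ n) = e n := by
    intro n
    have := congrFun (congrArg DFunLike.coe he) n
    simpa using this.symm
  have haM₂ : ∀ m ∈ M₂, a m = 0 := by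
    intro m hm
    have := congrFun (congrArg DFunLike.coe (hM2 (a ∘ₗ M₂.subtype))) ⟨m, hm⟩
    simpa using this
  constructor
  · ext x
    have haN₁ : a x ∈ N₁ := by
      have := congrFun (congrArg DFunLike.coe
        (hN2 ((N₂.linearProjOfIsCompl N₁ h₂.symm) ∘ₗ a))) x
      simp only [LinearMap.coe_comp, Function.comp_apply, LinearMap.zero_apply] at this
      rwa [Submodule.linearProjOfIsCompl, Submodule.projectionOnto_apply_eq_zero_iff] at this
    simp only [LinearMap.coe_comp, Function.comp_apply, Submodule.coe_subtype]
    rw [show μ (a x) = μ ((⟨a x, haN₁⟩ : N₁) : N) from rfl, he']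
    simp
  · ext x
    simp only [LinearMap.coe_comp, Function.comp_apply, Submodule.coe_subtype]
    set n : N₁ := e.symm (M₁.linearProjOfIsCompl M₂ h₁ x) with hn
    have hproj : M₁.linearProjOfIsCompl M₂ h₁ (μ n) = M₁.linearProjOfIsCompl M₂ h₁ x := by
      rw [he' n, hn, LinearEquiv.apply_symm_apply]
    have key : ∀ y : M, a y = a (M₁.linearProjOfIsCompl M₂ h₁ y) := by
      intro y
      have hy : y - (M₁.linearProjOfIsCompl M₂ h₁ y : M) ∈ M₂ := by
        rw [← Submodule.linearProjOfIsCompl_apply_eq_zero_iff h₁]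
        simp [Submodule.linearProjOfIsCompl_apply_left, Submodule.linearProjOfIsCompl,
          -Submodule.coe_projectionOnto_apply]
      have := haM₂ _ hy
      rw [map_sub, sub_eq_zero] at this
      exact this
    show a (μ (n : N)) = a x
    rw [key (μ (n : N)), hproj, ← key x]

end aux

/-- The Munn algebra `𝕄(R, M, N, μ)` (that is, `Hom_R(M, N)` with `a ⋅ b = a ∘ μ ∘ b`) has a
multiplicative unit if and only if there are direct sum decompositions `M = M₁ ⊕ M₂`,
`N = N₁ ⊕ N₂` with `Hom_R(M₂, N) = 0`, `Hom_R(M, N₂) = 0`, and `pr₁ ∘ μ` restricted to `N₁`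
an isomorphism `N₁ → M₁`.  Moreover, in that case the unit is the map `M → N` given by the
inverse of this isomorphism extended by zero. -/
theorem munn_has_unit_iff
    {R M N : Type*} [Ring R] [AddCommGroup M] [AddCommGroup N]
    [Module R M] [Module R N] (μ : N →ₗ[R] M) :
    ((∃ u : M →ₗ[R] N, ∀ a : M →ₗ[R] N, (u ∘ₗ μ ∘ₗ a) = a ∧ (a ∘ₗ μ ∘ₗ u) = a) ↔
      ∃ (M₁ M₂ : Submodule R M) (N₁ N₂ : Submodule R N) (h₁ : IsCompl M₁ M₂)
        (_ : IsCompl N₁ N₂),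
        (∀ f : M₂ →ₗ[R] N, f = 0) ∧ (∀ f : M →ₗ[R] N₂, f = 0) ∧
        Function.Bijective ((M₁.linearProjOfIsCompl M₂ h₁) ∘ₗ μ ∘ₗ N₁.subtype)) ∧
    (∀ (M₁ M₂ : Submodule R M) (N₁ N₂ : Submodule R N) (h₁ : IsCompl M₁ M₂)
        (_ : IsCompl N₁ N₂) (e : N₁ ≃ₗ[R] M₁),
        (∀ f : M₂ →ₗ[R] N, f = 0) → (∀ f : M →ₗ[R] N₂, f = 0) →
        ((e : N₁ →ₗ[R] M₁) = (M₁.linearProjOfIsCompl M₂ h₁) ∘ₗ μ ∘ₗ N₁.subtype) →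
        ∀ a : M →ₗ[R] N,
          ((N₁.subtype ∘ₗ (e.symm : M₁ →ₗ[R] N₁) ∘ₗ M₁.linearProjOfIsCompl M₂ h₁)
              ∘ₗ μ ∘ₗ a) = a ∧
          (a ∘ₗ μ ∘ₗ
            (N₁.subtype ∘ₗ (e.symm : M₁ →ₗ[R] N₁) ∘ₗ M₁.linearProjOfIsCompl M₂ h₁)) = a) := by
  constructor
  · constructor
    · rintro ⟨u, hu⟩
      have huu : ∀ x, u (μ (u x)) = u x := by
        intro x
        have := congrFun (congrArg DFunLike.coe (hu u).1) x
        simpa using this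
      set P : M →ₗ[R] M := μ ∘ₗ u with hPdef
      set Q : N →ₗ[R] N := u ∘ₗ μ with hQdef
      have hP : ∀ x, P (P x) = P x := by
        intro x; simp only [hPdef, LinearMap.coe_comp, Function.comp_apply]; rw [huu]
      have hQ : ∀ y, Q (Q y) = Q y := by
        intro y; simp only [hQdef, LinearMap.coe_comp, Function.comp_apply]; rw [huu]
      have h₁ := munn_isCompl_range_ker P hP
      have h₂ := munn_isCompl_range_ker Q hQ
      have hprojP := munn_proj_eq P hP h₁
      refine ⟨LinearMap.range P, LinearMap.ker P, LinearMap.range Q, LinearMap.ker Q,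
        h₁, h₂, ?_, ?_, ?_, ?_⟩
      · -- Hom(M₂, N) = 0
        intro f
        set g : M →ₗ[R] N :=
          f ∘ₗ ((LinearMap.ker P).linearProjOfIsCompl (LinearMap.range P) h₁.symm) with hg
        have hg0 : ∀ x, g x = 0 := by
          intro x
          have := (congrFun (congrArg DFunLike.coe (hu g).2) x).symm
          simp only [LinearMap.coe_comp, Function.comp_apply] at this
          rw [this, hg]
          simp only [LinearMap.coe_comp, Function.comp_apply]
          rw [Submodule.linearProjOfIsCompl, Submodule.projectionOnto_apply_of_mem_right h₁.symm ⟨x, rfl⟩, map_zero]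
        ext m
        have := hg0 m
        rw [hg] at this
        simpa [Submodule.linearProjOfIsCompl, Submodule.linearProjOfIsCompl_apply_left h₁.symm m] using this
      · -- Hom(M, N₂) = 0
        intro f
        ext x
        have := congrFun (congrArg DFunLike.coe (hu ((LinearMap.ker Q).subtype ∘ₗ f)).1) x
        simp only [LinearMap.coe_comp, Function.comp_apply, Submodule.coe_subtype] at this
        have hker : Q ((f x : N)) = 0 := (f x).2
        have : (0 : N) = (f x : N) := by
          rw [← hker]; exact this
        simpa using this.symm
      · -- injective
        intro n m hnm
        have hco : ∀ k : LinearMap.range Q, Q (k : N) = (k : N) := by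
          rintro ⟨k, y, rfl⟩; exact hQ y
        have hμ : ∀ k : LinearMap.range Q,
            (((LinearMap.range P).linearProjOfIsCompl (LinearMap.ker P) h₁)
              (μ (k : N)) : M) = μ (k : N) := by
          intro k
          rw [hprojP]
          show μ (u (μ (k : N))) = μ (k : N)
          rw [show u (μ (k : N)) = Q (k : N) from rfl, hco]
        have h1 : μ (n : N) = μ (m : N) := by
          have := congrArg (fun z => ((z : LinearMap.range P) : M)) hnm
          simp only [LinearMap.coe_comp, Function.comp_apply, Submodule.coe_subtype] at this
          rwa [hμ n, hμ m] at this
        have h2 : Q (n : N) = Q (m : N) := congrArg u h1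
        rw [hco n, hco m] at h2
        exact Subtype.ext h2
      · -- surjective
        rintro ⟨m, x, rfl⟩
        refine ⟨⟨u x, u x, huu x⟩, ?_⟩
        apply Subtype.ext
        simp only [LinearMap.coe_comp, Function.comp_apply, Submodule.coe_subtype]
        rw [hprojP]
        show μ (u (μ (u x))) = P x
        rw [huu x]; rfl
    · rintro ⟨M₁, M₂, N₁, N₂, h₁, h₂, hM2, hN2, hbij⟩
      set e : N₁ ≃ₗ[R] M₁ := LinearEquiv.ofBijective _ hbij with hedef
      have he : (e : N₁ →ₗ[R] M₁) = (M₁.linearProjOfIsCompl M₂ h₁) ∘ₗ μ ∘ₗ N₁.subtype := rfl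
      exact ⟨N₁.subtype ∘ₗ (e.symm : M₁ →ₗ[R] N₁) ∘ₗ M₁.linearProjOfIsCompl M₂ h₁,
        fun a => munn_unit_aux μ M₁ M₂ N₁ N₂ h₁ h₂ e hM2 hN2 he a⟩
  · intro M₁ M₂ N₁ N₂ h₁ h₂ e hM2 hN2 he a
    exact munn_unit_aux μ M₁ M₂ N₁ N₂ h₁ h₂ e hM2 hN2 he a
end

section
/- Let A be a unital ring with orthogonal idempotents e₁, e₂ summing to 1, A_{ij} = e_i A e_j, and P a progenerator of Mod-A₁₁. Then End_A((P ⊗_{A₁₁} e₁A) ⊕ e₂A) is isomorphic to the ring of 2×2 matrices with entries B₁₁ = End_{A₁₁}(P), B₁₂ = P ⊗_{A₁₁} A₁₂, B₂₁ = Hom_{A₁₁}(P, A₂₁), B₂₂ = A₂₂ (with the natural compositions as matrix multiplication). -/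
universe w w'

open MulOpposite

variable {A : Type*} [Ring A]

/-- An idempotent of a ring. -/
structure Idem (A : Type*) [Ring A] where
  e : A
  idem : e * e = e

/-- The additive subgroup `eAf = {x | e·x = x, x·f = x}` of a ring `A`. -/
def cornerSet₂ (e f : A) : AddSubgroup A where
  carrier := {x | e * x = x ∧ x * f = x}
  add_mem' := by
    rintro x y ⟨hx1, hx2⟩ ⟨hy1, hy2⟩
    exact ⟨by rw [mul_add, hx1, hy1], by rw [add_mul, hx2, hy2]⟩
  zero_mem' := ⟨mul_zero e, zero_mul f⟩
  neg_mem' := by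
    rintro x ⟨h1, h2⟩
    exact ⟨by rw [mul_neg, h1], by rw [neg_mul, h2]⟩

/-- Multiplication `eAf × fAg → eAg`. -/
def cmul {e f g : A} (x : ↥(cornerSet₂ e f)) (y : ↥(cornerSet₂ f g)) :
    ↥(cornerSet₂ e g) :=
  ⟨x.1 * y.1, ⟨by rw [← mul_assoc, x.2.1], by rw [mul_assoc, y.2.2]⟩⟩

/-- The corner ring `eAe` of an idempotent `e`, a unital ring with unit `e`. -/
def Corner (E : Idem A) : Type _ := ↥(cornerSet₂ E.e E.e)

instance (E : Idem A) : AddCommGroup (Corner E) :=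
  inferInstanceAs (AddCommGroup ↥(cornerSet₂ E.e E.e))

instance (E : Idem A) : Ring (Corner E) :=
  { (inferInstance : AddCommGroup ↥(cornerSet₂ E.e E.e)) with
    mul := fun x y => cmul x y
    mul_assoc := fun a b c => Subtype.ext (mul_assoc a.1 b.1 c.1)
    one := ⟨E.e, E.idem, E.idem⟩
    one_mul := fun a => Subtype.ext a.2.1
    mul_one := fun a => Subtype.ext a.2.2
    left_distrib := fun a b c => Subtype.ext (mul_add a.1 b.1 c.1)
    right_distrib := fun a b c => Subtype.ext (add_mul a.1 b.1 c.1)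
    zero_mul := fun a => Subtype.ext (zero_mul a.1)
    mul_zero := fun a => Subtype.ext (mul_zero a.1) }

/-- The right ideal `eA`, as a right `A`-submodule of `A`. -/
def rightIdealOf (e : A) : Submodule Aᵐᵒᵖ A where
  carrier := {x | e * x = x}
  add_mem' := by
    intro x y hx hy
    show e * (x + y) = x + y
    rw [mul_add, hx, hy]
  zero_mem' := mul_zero e
  smul_mem' := by
    intro a x hx
    show e * (x * a.unop) = x * a.unop
    rw [← mul_assoc, hx]

/-- The left action of the corner ring `e₁Ae₁` on the right ideal `e₁A`. -/
instance cornerSMul (E : Idem A) : SMul (Corner E) ↥(rightIdealOf E.e) :=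
  ⟨fun c x => ⟨c.1 * x.1, show _ * (c.1 * x.1) = c.1 * x.1 by rw [← mul_assoc, c.2.1]⟩⟩

instance cornerModule (E : Idem A) : Module (Corner E) ↥(rightIdealOf E.e) where
  one_smul x := Subtype.ext x.2
  mul_smul c d x := Subtype.ext (mul_assoc c.1 d.1 x.1)
  smul_zero c := Subtype.ext (mul_zero c.1)
  smul_add c x y := Subtype.ext (mul_add c.1 x.1 y.1)
  add_smul c d x := Subtype.ext (add_mul c.1 d.1 x.1)
  zero_smul x := Subtype.ext (zero_mul x.1)

/-- The right action of the corner ring `fAf` on `eAf`. -/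
instance cornerSMul₂ (e : A) (F : Idem A) : SMul (Corner F)ᵐᵒᵖ ↥(cornerSet₂ e F.e) :=
  ⟨fun c x => cmul x c.unop⟩

instance cornerModule₂ (e : A) (F : Idem A) :
    Module (Corner F)ᵐᵒᵖ ↥(cornerSet₂ e F.e) where
  one_smul x := Subtype.ext x.2.2
  mul_smul c d x := Subtype.ext (mul_assoc x.1 d.unop.1 c.unop.1).symm
  smul_zero c := Subtype.ext (zero_mul c.unop.1)
  smul_add c x y := Subtype.ext (add_mul x.1 y.1 c.unop.1)
  add_smul c d x := Subtype.ext (mul_add x.1 c.unop.1 d.unop.1)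
  zero_smul x := Subtype.ext (mul_zero x.1)

section BalancedTransfer

universe uX uY

private def mkBiAdd {P₀ : Type*} [AddCommGroup P₀] {N : Type*} [AddCommGroup N]
    {X : Type*} [AddCommGroup X] (b : P₀ → N → X)
    (h1 : ∀ p p' n, b (p + p') n = b p n + b p' n)
    (h2 : ∀ p n n', b p (n + n') = b p n + b p n') : P₀ →+ N →+ X where
  toFun p :=
    { toFun := b p
      map_zero' := by
        have h := h2 p 0 0; rw [add_zero] at h; exact (left_eq_add.mp h)
      map_add' := h2 p }
  map_zero' := by
    ext n
    have h := h1 0 0 n; rw [add_zero] at h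
    exact (left_eq_add.mp h)
  map_add' p p' := by ext n; exact h1 p p' n

@[simp] private lemma mkBiAdd_apply {P₀ : Type*} [AddCommGroup P₀] {N : Type*} [AddCommGroup N]
    {X : Type*} [AddCommGroup X] (b : P₀ → N → X) (h1) (h2) (p : P₀) (n : N) :
    mkBiAdd b h1 h2 p n = b p n := rfl

variable (R : Type*) [Ring R] (P₀ : Type*) [AddCommGroup P₀] [Module Rᵐᵒᵖ P₀]
  (N : Type*) [AddCommGroup N] [Module R N]

open TensorProduct in
private noncomputable def balRel : AddSubgroup (TensorProduct ℤ P₀ N) :=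
  AddSubgroup.closure
    {z | ∃ (p : P₀) (c : R) (n : N), z = (op c • p) ⊗ₜ[ℤ] n - p ⊗ₜ[ℤ] (c • n)}

private def QT : Type _ := TensorProduct ℤ P₀ N ⧸ balRel R P₀ N

noncomputable instance : AddCommGroup (QT R P₀ N) :=
  QuotientAddGroup.Quotient.addCommGroup _

variable {R P₀ N}

open TensorProduct in
private noncomputable def qmk (p : P₀) (n : N) : QT R P₀ N := QuotientAddGroup.mk (p ⊗ₜ[ℤ] n)

private lemma qmk_addl (p p' : P₀) (n : N) :
    (qmk (p + p') n : QT R P₀ N) = qmk p n + qmk p' n := by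
  show QuotientAddGroup.mk _ = QuotientAddGroup.mk _ + QuotientAddGroup.mk _
  rw [TensorProduct.add_tmul]; rfl

private lemma qmk_addr (p : P₀) (n n' : N) :
    (qmk p (n + n') : QT R P₀ N) = qmk p n + qmk p n' := by
  show QuotientAddGroup.mk _ = QuotientAddGroup.mk _ + QuotientAddGroup.mk _
  rw [TensorProduct.tmul_add]; rfl

private lemma qmk_bal (p : P₀) (c : R) (n : N) :
    (qmk (op c • p) n : QT R P₀ N) = qmk p (c • n) := by
  refine QuotientAddGroup.eq.mpr ?_
  have h : ((op c • p) ⊗ₜ[ℤ] n - p ⊗ₜ[ℤ] (c • n)) ∈ balRel R P₀ N :=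
    AddSubgroup.subset_closure ⟨p, c, n, rfl⟩
  simpa [neg_sub, neg_add_eq_sub] using neg_mem h

private lemma balRel_le {X : Type uX} [AddCommGroup X]
    (φ : TensorProduct ℤ P₀ N →+ X)
    (h : ∀ (p : P₀) (c : R) (n : N),
      φ ((op c • p) ⊗ₜ[ℤ] n) = φ (p ⊗ₜ[ℤ] (c • n))) :
    balRel R P₀ N ≤ φ.ker := by
  unfold balRel
  refine (AddSubgroup.closure_le _).mpr ?_
  rintro z ⟨p, c, n, rfl⟩
  rw [SetLike.mem_coe, AddMonoidHom.mem_ker, map_sub, h, sub_self]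

private noncomputable def qlift {X : Type uX} [AddCommGroup X] (b : P₀ → N → X)
    (h1 : ∀ p p' n, b (p + p') n = b p n + b p' n)
    (h2 : ∀ p n n', b p (n + n') = b p n + b p n')
    (h3 : ∀ (p : P₀) (c : R) (n : N), b (op c • p) n = b p (c • n)) :
    QT R P₀ N →+ X :=
  QuotientAddGroup.lift _
    (TensorProduct.liftAddHom (mkBiAdd b h1 h2) (fun z p n => by
      have ha := map_zsmul ((mkBiAdd b h1 h2).flip n) z p
      have hb := map_zsmul (mkBiAdd b h1 h2 p) z n
      rw [AddMonoidHom.flip_apply, AddMonoidHom.flip_apply] at ha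
      exact ha.trans hb.symm))
    (balRel_le _ (fun p c n => by
      rw [TensorProduct.liftAddHom_tmul, TensorProduct.liftAddHom_tmul,
        mkBiAdd_apply, mkBiAdd_apply, h3]))

@[simp] private lemma qlift_mk {X : Type uX} [AddCommGroup X] (b : P₀ → N → X)
    (h1 : ∀ p p' n, b (p + p') n = b p n + b p' n)
    (h2 : ∀ p n n', b p (n + n') = b p n + b p n')
    (h3 : ∀ (p : P₀) (c : R) (n : N), b (op c • p) n = b p (c • n))
    (p : P₀) (n : N) :
    qlift b h1 h2 h3 (qmk p n) = b p n := by
  show QuotientAddGroup.lift _ _ _ (QuotientAddGroup.mk _) = _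
  rw [QuotientAddGroup.lift_mk, TensorProduct.liftAddHom_tmul, mkBiAdd_apply]

private lemma qgen :
    AddSubgroup.closure {z : QT R P₀ N | ∃ p n, z = qmk p n} = ⊤ := by
  rw [eq_top_iff]
  rintro x -
  obtain ⟨y, rfl⟩ := QuotientAddGroup.mk_surjective x
  induction y using TensorProduct.induction_on with
  | zero => exact zero_mem _
  | tmul p n => exact AddSubgroup.subset_closure ⟨p, n, rfl⟩
  | add a b ha hb =>
      have : (QuotientAddGroup.mk (a + b) : QT R P₀ N)
          = QuotientAddGroup.mk a + QuotientAddGroup.mk b := rfl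
      rw [this]; exact add_mem ha hb

private lemma qext {X : Type uY} [AddCommGroup X] {f g : QT R P₀ N →+ X}
    (h : ∀ p n, f (qmk p n) = g (qmk p n)) : f = g :=
  AddMonoidHom.eq_of_eqOn_dense qgen (by rintro z ⟨p, n, rfl⟩; exact h p n)

end BalancedTransfer
section Transfer

private theorem transferUP.{u1, u2, u3, u4, u5, u6} {R : Type u1} [Ring R]
    {P₀ : Type u2} [AddCommGroup P₀]
    [Module Rᵐᵒᵖ P₀] {N : Type u3} [AddCommGroup N] [Module R N]
    {T : Type u4} [AddCommGroup T] (t : P₀ → N → T)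
    (haddl : ∀ p p' n, t (p + p') n = t p n + t p' n)
    (haddr : ∀ p n n', t p (n + n') = t p n + t p n')
    (hbal : ∀ (p : P₀) (c : R) (n : N), t (op c • p) n = t p (c • n))
    (huniv : ∀ (X : Type u5) (_ : AddCommGroup X) (b : P₀ → N → X),
      (∀ p p' n, b (p + p') n = b p n + b p' n) →
      (∀ p n n', b p (n + n') = b p n + b p n') →
      (∀ (p : P₀) (c : R) (n : N), b (op c • p) n = b p (c • n)) →
      ∃! g : T →+ X, ∀ p n, g (t p n) = b p n) :
    AddSubgroup.closure {z : T | ∃ p n, z = t p n} = ⊤ ∧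
      ∀ (X : Type u6) (_ : AddCommGroup X) (b : P₀ → N → X),
        (∀ p p' n, b (p + p') n = b p n + b p' n) →
        (∀ p n n', b p (n + n') = b p n + b p n') →
        (∀ (p : P₀) (c : R) (n : N), b (op c • p) n = b p (c • n)) →
        ∃ g : T →+ X, ∀ p n, g (t p n) = b p n := by
  have hgen : AddSubgroup.closure {z : T | ∃ p n, z = t p n} = ⊤ := by
    by_contra hne
    obtain ⟨u, hu⟩ : ∃ u, u ∉ AddSubgroup.closure {z : T | ∃ p n, z = t p n} := by
      by_contra h
      push_neg at h
      exact hne ((AddSubgroup.eq_top_iff' _).mpr h)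
    set G := AddSubgroup.closure {z : T | ∃ p n, z = t p n} with hG
    have hmku : (QuotientAddGroup.mk u : T ⧸ G) ≠ 0 := by
      simpa [QuotientAddGroup.eq_zero_iff] using hu
    obtain ⟨χ, hχ⟩ := CharacterModule.exists_character_apply_ne_zero_of_ne_zero hmku
    let χ' : (T ⧸ G) →+ AddCircle (1 : ℚ) := χ
    let f : T →+ ULift.{u5} (AddCircle (1 : ℚ)) :=
      (AddEquiv.ulift.symm.toAddMonoidHom.comp (χ'.comp (QuotientAddGroup.mk' G)))
    obtain ⟨g, hg, hgu⟩ := huniv (ULift.{u5} (AddCircle (1 : ℚ))) inferInstance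
      (fun _ _ => 0) (by simp) (by simp) (by simp)
    have h1 : f = g := hgu f (fun p n => by
      have hmem : t p n ∈ G := AddSubgroup.subset_closure ⟨p, n, rfl⟩
      have h0 : (QuotientAddGroup.mk (t p n) : T ⧸ G) = 0 :=
        (QuotientAddGroup.eq_zero_iff _).mpr hmem
      show AddEquiv.ulift.symm (χ' (QuotientAddGroup.mk (t p n))) = 0
      rw [h0, map_zero, map_zero])
    have h2 : (0 : T →+ ULift.{u5} (AddCircle (1 : ℚ))) = g := hgu 0 (fun p n => rfl)
    have h3 : f u = 0 := by rw [h1, ← h2]; rfl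
    have h4 : AddEquiv.ulift.symm (χ' (QuotientAddGroup.mk u)) = 0 := h3
    exact hχ (AddEquiv.ulift.symm.injective (h4.trans (map_zero _).symm))
  let θ : QT R P₀ N →+ T := qlift t haddl haddr hbal
  have hθ : ∀ p n, θ (qmk p n) = t p n := fun p n => qlift_mk t haddl haddr hbal p n
  have hθsurj : Function.Surjective θ := by
    intro x
    have hle : AddSubgroup.closure {z : T | ∃ p n, z = t p n} ≤ θ.range :=
      (AddSubgroup.closure_le _).mpr (by rintro z ⟨p, n, rfl⟩; exact ⟨qmk p n, hθ p n⟩)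
    rw [hgen] at hle
    exact hle (AddSubgroup.mem_top x)
  have hθinj : Function.Injective θ := by
    rw [injective_iff_map_eq_zero]
    intro z hz
    by_contra hz0
    obtain ⟨χ, hχ⟩ := CharacterModule.exists_character_apply_ne_zero_of_ne_zero hz0
    let χ' : QT R P₀ N →+ AddCircle (1 : ℚ) := χ
    obtain ⟨g, hg, -⟩ := huniv (ULift.{u5} (AddCircle (1 : ℚ))) inferInstance
      (fun p n => AddEquiv.ulift.symm (χ' (qmk p n)))
      (fun p p' n => by simp only [qmk_addl, map_add])
      (fun p n n' => by simp only [qmk_addr, map_add])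
      (fun p c n => by simp only [qmk_bal])
    have heq : AddEquiv.ulift.symm.toAddMonoidHom.comp χ' = g.comp θ :=
      qext (fun p n => by
        show AddEquiv.ulift.symm (χ' (qmk p n)) = g (θ (qmk p n))
        rw [hθ, hg])
    have happ := congrArg (fun k : QT R P₀ N →+ ULift.{u5} (AddCircle (1 : ℚ)) => k z) heq
    simp only [AddMonoidHom.comp_apply] at happ
    rw [hz, map_zero] at happ
    exact hχ (AddEquiv.ulift.symm.injective (happ.trans (map_zero _).symm))
  let θe : QT R P₀ N ≃+ T := AddEquiv.ofBijective θ ⟨hθinj, hθsurj⟩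
  refine ⟨hgen, ?_⟩
  intro X _ b h1 h2 h3
  refine ⟨(qlift b h1 h2 h3).comp θe.symm.toAddMonoidHom, fun p n => ?_⟩
  have hyx : θe.symm (t p n) = qmk p n := by
    rw [AddEquiv.symm_apply_eq]
    exact (hθ p n).symm
  show qlift b h1 h2 h3 (θe.symm (t p n)) = b p n
  rw [hyx, qlift_mk]

end Transfer
section Helpers

/-- Left action of the corner ring `eAe` on `eAf`, needed to see `A₁₂` as a left
`A₁₁`-module. -/
instance leftCornerSMul (E : Idem A) (f : A) : SMul (Corner E) ↥(cornerSet₂ E.e f) :=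
  ⟨fun c x => cmul c x⟩

instance leftCornerModule (E : Idem A) (f : A) : Module (Corner E) ↥(cornerSet₂ E.e f) where
  one_smul x := Subtype.ext x.2.1
  mul_smul c d x := Subtype.ext (mul_assoc c.1 d.1 x.1)
  smul_zero c := Subtype.ext (mul_zero c.1)
  smul_add c x y := Subtype.ext (mul_add c.1 x.1 y.1)
  add_smul c d x := Subtype.ext (add_mul c.1 d.1 x.1)
  zero_smul x := Subtype.ext (zero_mul x.1)

/-- `x ↦ x·e`, from `eA` to `eAe`. -/
private def cProj (E : Idem A) : ↥(rightIdealOf E.e) →+ Corner E where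
  toFun x := ⟨x.1 * E.e, by rw [← mul_assoc, (x.2 : E.e * x.1 = x.1)],
    by rw [mul_assoc, E.idem]⟩
  map_zero' := Subtype.ext (zero_mul E.e)
  map_add' x y := Subtype.ext (add_mul x.1 y.1 E.e)

@[simp] private lemma cProj_val (E : Idem A) (x : ↥(rightIdealOf E.e)) :
    (cProj E x).1 = x.1 * E.e := rfl

private lemma cProj_smul (E : Idem A) (c : Corner E) (x : ↥(rightIdealOf E.e)) :
    cProj E (c • x) = c * cProj E x :=
  Subtype.ext (mul_assoc c.1 x.1 E.e)

/-- `x ↦ x·f`, from `eA` to `eAf`, for `f` idempotent. -/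
private def projC (E : Idem A) (f : A) (hf : f * f = f) :
    ↥(rightIdealOf E.e) →+ ↥(cornerSet₂ E.e f) where
  toFun x := ⟨x.1 * f, by rw [← mul_assoc, (x.2 : E.e * x.1 = x.1)], by rw [mul_assoc, hf]⟩
  map_zero' := Subtype.ext (zero_mul f)
  map_add' x y := Subtype.ext (add_mul x.1 y.1 f)

@[simp] private lemma projC_val (E : Idem A) (f : A) (hf : f * f = f)
    (x : ↥(rightIdealOf E.e)) : (projC E f hf x).1 = x.1 * f := rfl

private lemma projC_smul (E : Idem A) (f : A) (hf : f * f = f) (c : Corner E)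
    (x : ↥(rightIdealOf E.e)) : projC E f hf (c • x) = cmul c (projC E f hf x) :=
  Subtype.ext (mul_assoc c.1 x.1 f)

/-- The inclusion `eAf → eA`. -/
private def inclC (E : Idem A) (f : A) : ↥(cornerSet₂ E.e f) →+ ↥(rightIdealOf E.e) where
  toFun a := ⟨a.1, a.2.1⟩
  map_zero' := rfl
  map_add' _ _ := rfl

@[simp] private lemma inclC_val (E : Idem A) (f : A) (a : ↥(cornerSet₂ E.e f)) :
    (inclC E f a).1 = a.1 := rfl

private lemma inclC_smul (E : Idem A) (f : A) (c : Corner E) (a : ↥(cornerSet₂ E.e f)) :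
    inclC E f (c • a) = c • inclC E f a :=
  Subtype.ext rfl

/-- Multiplication `eAf × fA → eA`. -/
private def cmulI {e f : A} (z : ↥(cornerSet₂ e f)) (x : ↥(rightIdealOf f)) :
    ↥(rightIdealOf e) :=
  ⟨z.1 * x.1, show e * (z.1 * x.1) = z.1 * x.1 by rw [← mul_assoc, z.2.1]⟩

@[simp] private lemma cmulI_val {e f : A} (z : ↥(cornerSet₂ e f)) (x : ↥(rightIdealOf f)) :
    (cmulI z x).1 = z.1 * x.1 := rfl

private lemma cmulI_addl {e f : A} (z w : ↥(cornerSet₂ e f)) (x : ↥(rightIdealOf f)) :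
    cmulI (z + w) x = cmulI z x + cmulI w x :=
  Subtype.ext (add_mul z.1 w.1 x.1)

private lemma cmulI_addr {e f : A} (z : ↥(cornerSet₂ e f)) (x y : ↥(rightIdealOf f)) :
    cmulI z (x + y) = cmulI z x + cmulI z y :=
  Subtype.ext (mul_add z.1 x.1 y.1)

private lemma cmulI_opsmul {e : A} (E : Idem A) (z : ↥(cornerSet₂ e E.e)) (c : Corner E)
    (x : ↥(rightIdealOf E.e)) : cmulI (op c • z) x = cmulI z (c • x) :=
  Subtype.ext (mul_assoc z.1 c.1 x.1)

private lemma cmulI_smulA {e f : A} (z : ↥(cornerSet₂ e f)) (a : Aᵐᵒᵖ)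
    (x : ↥(rightIdealOf f)) : cmulI z (a • x) = a • cmulI z x :=
  Subtype.ext (mul_assoc z.1 x.1 a.unop).symm

private lemma ext_of_gen2 {T X : Type*} [AddCommGroup T] [AddCommGroup X]
    {P₀ N : Type*} (t : P₀ → N → T)
    (hgen : AddSubgroup.closure {z : T | ∃ p n, z = t p n} = ⊤)
    {f g : T →+ X} (h : ∀ p n, f (t p n) = g (t p n)) : f = g :=
  AddMonoidHom.eq_of_eqOn_dense hgen (by rintro z ⟨p, n, rfl⟩; exact h p n)

end Helpers
set_option maxHeartbeats 1000000 in
/-- **Lemma.** Let `A` be a unital ring with orthogonal idempotents `e₁, e₂` summing to `1`,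
`A_{ij} = e_iAe_j`, and `P` a progenerator of `Mod-A₁₁`.  Let `T = P ⊗_{A₁₁} e₁A` (a right
`A`-module) and `T₁₂ = P ⊗_{A₁₁} A₁₂`, both presented by their universal properties.  Then
`End_A((P ⊗_{A₁₁} e₁A) ⊕ e₂A)` is isomorphic to the generalized `2×2` matrix ring with
entries `B₁₁ = End_{A₁₁}(P)`, `B₁₂ = P ⊗_{A₁₁} A₁₂`, `B₂₁ = Hom_{A₁₁}(P, A₂₁)`,
`B₂₂ = A₂₂`, multiplication being given by the natural composition pairings. -/
theorem endomorphism_ring_matrix_form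
    (E₁ E₂ : Idem A) (hsum : E₁.e + E₂.e = 1)
    (horth : E₁.e * E₂.e = 0) (horth' : E₂.e * E₁.e = 0)
    -- `P`, a progenerator of `Mod-A₁₁`:
    (P : Type*) [AddCommGroup P] [Module (Corner E₁)ᵐᵒᵖ P]
    [Module.Finite (Corner E₁)ᵐᵒᵖ P] [Module.Projective (Corner E₁)ᵐᵒᵖ P]
    (hgen : ∃ (n : ℕ) (f : (Fin n → P) →ₗ[(Corner E₁)ᵐᵒᵖ] Corner E₁), Function.Surjective f)
    -- `T = P ⊗_{A₁₁} e₁A`, a right `A`-module, presented by its universal property: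
    (T : Type*) [AddCommGroup T] [Module Aᵐᵒᵖ T]
    (t : P → ↥(rightIdealOf E₁.e) → T)
    (ht_addl : ∀ p p' x, t (p + p') x = t p x + t p' x)
    (ht_addr : ∀ p x x', t p (x + x') = t p x + t p x')
    (ht_bal : ∀ (p : P) (c : Corner E₁) (x : ↥(rightIdealOf E₁.e)),
      t (op c • p) x = t p (c • x))
    (ht_smul : ∀ (p : P) (a : Aᵐᵒᵖ) (x : ↥(rightIdealOf E₁.e)),
      t p (a • x) = a • t p x)
    (ht_univ : ∀ (X : Type w) (_ : AddCommGroup X) (b : P → ↥(rightIdealOf E₁.e) → X),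
      (∀ p p' x, b (p + p') x = b p x + b p' x) →
      (∀ p x x', b p (x + x') = b p x + b p x') →
      (∀ (p : P) (c : Corner E₁) (x : ↥(rightIdealOf E₁.e)),
        b (op c • p) x = b p (c • x)) →
      ∃! g : T →+ X, ∀ p x, g (t p x) = b p x)
    -- `T₁₂ = P ⊗_{A₁₁} A₁₂`, presented by its universal property:
    (T₁₂ : Type*) [AddCommGroup T₁₂]
    (t₁₂ : P → ↥(cornerSet₂ E₁.e E₂.e) → T₁₂)
    (ht₁₂_addl : ∀ p p' a, t₁₂ (p + p') a = t₁₂ p a + t₁₂ p' a)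
    (ht₁₂_addr : ∀ p a a', t₁₂ p (a + a') = t₁₂ p a + t₁₂ p a')
    (ht₁₂_bal : ∀ (p : P) (c : Corner E₁) (a : ↥(cornerSet₂ E₁.e E₂.e)),
      t₁₂ (op c • p) a = t₁₂ p (cmul c a))
    (ht₁₂_univ : ∀ (X : Type w') (_ : AddCommGroup X)
      (b : P → ↥(cornerSet₂ E₁.e E₂.e) → X),
      (∀ p p' a, b (p + p') a = b p a + b p' a) →
      (∀ p a a', b p (a + a') = b p a + b p a') →
      (∀ (p : P) (c : Corner E₁) (a : ↥(cornerSet₂ E₁.e E₂.e)),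
        b (op c • p) a = b p (cmul c a)) →
      ∃! g : T₁₂ →+ X, ∀ p a, g (t₁₂ p a) = b p a) :
    -- conclusion: `End_A(P♯)` is the generalized matrix ring
    ∃ (m₁₁₁₂ : Module.End (Corner E₁)ᵐᵒᵖ P → T₁₂ → T₁₂)
      (m₁₂₂₁ : T₁₂ → (P →ₗ[(Corner E₁)ᵐᵒᵖ] ↥(cornerSet₂ E₂.e E₁.e)) →
        Module.End (Corner E₁)ᵐᵒᵖ P)
      (m₁₂₂₂ : T₁₂ → Corner E₂ → T₁₂)
      (m₂₁₁₂ : (P →ₗ[(Corner E₁)ᵐᵒᵖ] ↥(cornerSet₂ E₂.e E₁.e)) → T₁₂ → Corner E₂)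
      (m₂₂₂₁ : Corner E₂ → (P →ₗ[(Corner E₁)ᵐᵒᵖ] ↥(cornerSet₂ E₂.e E₁.e)) →
        (P →ₗ[(Corner E₁)ᵐᵒᵖ] ↥(cornerSet₂ E₂.e E₁.e))),
      -- the natural composition pairings, characterized on generators:
      (∀ g u v, m₁₁₁₂ g (u + v) = m₁₁₁₂ g u + m₁₁₁₂ g v) ∧
      (∀ g p a, m₁₁₁₂ g (t₁₂ p a) = t₁₂ (g p) a) ∧
      (∀ u v g, m₁₂₂₁ (u + v) g = m₁₂₂₁ u g + m₁₂₂₁ v g) ∧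
      (∀ p a g q, (m₁₂₂₁ (t₁₂ p a) g) q = op (show Corner E₁ from cmul a (g q)) • p) ∧
      (∀ u v c, m₁₂₂₂ (u + v) c = m₁₂₂₂ u c + m₁₂₂₂ v c) ∧
      (∀ p a c, m₁₂₂₂ (t₁₂ p a) c = t₁₂ p (cmul a c)) ∧
      (∀ g u v, m₂₁₁₂ g (u + v) = m₂₁₁₂ g u + m₂₁₁₂ g v) ∧
      (∀ g p a, m₂₁₁₂ g (t₁₂ p a) = (show Corner E₂ from cmul (g p) a)) ∧
      (∀ c g q, (m₂₂₂₁ c g) q = cmul c (g q)) ∧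
      -- the additive isomorphism, multiplicative for the matrix product:
      ∃ Ψ : Module.End Aᵐᵒᵖ (T × ↥(rightIdealOf E₂.e)) ≃+
          (Module.End (Corner E₁)ᵐᵒᵖ P × T₁₂ ×
            (P →ₗ[(Corner E₁)ᵐᵒᵖ] ↥(cornerSet₂ E₂.e E₁.e)) × Corner E₂),
        ∀ x y,
          Ψ (x * y) =
            ((Ψ x).1 * (Ψ y).1 + m₁₂₂₁ (Ψ x).2.1 (Ψ y).2.2.1,
             m₁₁₁₂ (Ψ x).1 (Ψ y).2.1 + m₁₂₂₂ (Ψ x).2.1 (Ψ y).2.2.2,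
             (Ψ x).2.2.1 ∘ₗ (Ψ y).1 + m₂₂₂₁ (Ψ x).2.2.2 (Ψ y).2.2.1,
             m₂₁₁₂ (Ψ x).2.2.1 (Ψ y).2.1 + (Ψ x).2.2.2 * (Ψ y).2.2.2) := by
  classical
  have hTgen := (transferUP.{_,_,_,_,_,0} t ht_addl ht_addr ht_bal ht_univ).1
  have hT12gen :=
    (transferUP.{_,_,_,_,_,0} t₁₂ ht₁₂_addl ht₁₂_addr (fun p c a => ht₁₂_bal p c a) ht₁₂_univ).1
  have he₁ : E₁.e * E₁.e = E₁.e := E₁.idem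
  have he₂ : E₂.e * E₂.e = E₂.e := E₂.idem
  let ε₁ : ↥(rightIdealOf E₁.e) := ⟨E₁.e, E₁.idem⟩
  let ε₂ : ↥(rightIdealOf E₂.e) := ⟨E₂.e, E₂.idem⟩
  -- the lift `β : T →+ P`, `t p x ↦ p · (x e₁)`
  obtain ⟨β, hβ⟩ := (transferUP t ht_addl ht_addr ht_bal ht_univ).2 P inferInstance
    (fun p x => op (cProj E₁ x) • p)
    (fun p p' x => smul_add (op (cProj E₁ x)) p p')
    (fun p x x' => by
      show op (cProj E₁ (x + x')) • p = op (cProj E₁ x) • p + op (cProj E₁ x') • p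
      rw [map_add, op_add, add_smul])
    (fun p c x => by
      show op (cProj E₁ x) • op c • p = op (cProj E₁ (c • x)) • p
      rw [← mul_smul, ← MulOpposite.op_mul, cProj_smul])
  -- the lift `δ : T →+ T₁₂`, `t p x ↦ t₁₂ p (x e₂)`
  obtain ⟨δ, hδ⟩ := (transferUP t ht_addl ht_addr ht_bal ht_univ).2 T₁₂ inferInstance
    (fun p x => t₁₂ p (projC E₁ E₂.e he₂ x))
    (fun p p' x => ht₁₂_addl _ _ _)
    (fun p x x' => by
      show t₁₂ p (projC E₁ E₂.e he₂ (x + x')) = _ + _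
      rw [map_add, ht₁₂_addr])
    (fun p c x => by
      show t₁₂ (op c • p) (projC E₁ E₂.e he₂ x) = t₁₂ p (projC E₁ E₂.e he₂ (c • x))
      rw [ht₁₂_bal, projC_smul])
  -- the lift `γ : T₁₂ →+ T`, `t₁₂ p a ↦ t p a`
  obtain ⟨γ, hγ⟩ := (transferUP t₁₂ ht₁₂_addl ht₁₂_addr (fun p c a => ht₁₂_bal p c a) ht₁₂_univ).2 T inferInstance
    (fun p a => t p (inclC E₁ E₂.e a))
    (fun p p' a => ht_addl _ _ _)
    (fun p a a' => by
      show t p (inclC E₁ E₂.e (a + a')) = _ + _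
      rw [map_add, ht_addr])
    (fun p c a => by
      show t (op c • p) (inclC E₁ E₂.e a) = t p (inclC E₁ E₂.e (c • a))
      rw [ht_bal, inclC_smul])
  -- the lift family `TG g : T →+ T`, `t p x ↦ t (g p) x`
  have TGex : ∀ g : Module.End (Corner E₁)ᵐᵒᵖ P, ∃ f : T →+ T,
      ∀ p x, f (t p x) = t (g p) x := fun g =>
    (transferUP t ht_addl ht_addr ht_bal ht_univ).2 T inferInstance (fun p x => t (g p) x)
      (fun p p' x => by
        show t (g (p + p')) x = t (g p) x + t (g p') x
        rw [map_add, ht_addl])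
      (fun p x x' => ht_addr _ _ _)
      (fun p c x => by
        show t (g (op c • p)) x = t (g p) (c • x)
        rw [LinearMap.map_smul, ht_bal])
  choose TG hTG using TGex
  -- the lift family `TH h : T →+ e₂A`, `t p x ↦ (h p) x`
  have THex : ∀ h : P →ₗ[(Corner E₁)ᵐᵒᵖ] ↥(cornerSet₂ E₂.e E₁.e),
      ∃ f : T →+ ↥(rightIdealOf E₂.e), ∀ p x, f (t p x) = cmulI (h p) x := fun h =>
    (transferUP t ht_addl ht_addr ht_bal ht_univ).2 ↥(rightIdealOf E₂.e) inferInstance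
      (fun p x => cmulI (h p) x)
      (fun p p' x => by
        show cmulI (h (p + p')) x = cmulI (h p) x + cmulI (h p') x
        rw [map_add, cmulI_addl])
      (fun p x x' => cmulI_addr _ _ _)
      (fun p c x => by
        show cmulI (h (op c • p)) x = cmulI (h p) (c • x)
        rw [LinearMap.map_smul]; exact cmulI_opsmul E₁ (h p) c x)
  choose TH hTH using THex
  -- the lift family `M21 h : T₁₂ →+ A₂₂`, `t₁₂ p a ↦ (h p) a`
  have M21ex : ∀ h : P →ₗ[(Corner E₁)ᵐᵒᵖ] ↥(cornerSet₂ E₂.e E₁.e),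
      ∃ f : T₁₂ →+ Corner E₂, ∀ p a, f (t₁₂ p a) = cmul (h p) a := fun h =>
    (transferUP t₁₂ ht₁₂_addl ht₁₂_addr (fun p c a => ht₁₂_bal p c a) ht₁₂_univ).2
      (Corner E₂) inferInstance (fun p a => cmul (h p) a)
      (fun p p' a => by
        show cmul (h (p + p')) a = cmul (h p) a + cmul (h p') a
        rw [map_add]; exact Subtype.ext (add_mul _ _ _))
      (fun p a a' => Subtype.ext (mul_add _ _ _))
      (fun p c a => by
        show cmul (h (op c • p)) a = cmul (h p) (cmul c a)
        rw [LinearMap.map_smul]; exact Subtype.ext (mul_assoc _ _ _))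
  choose M21 hM21 using M21ex
  -- pointwise identities
  have K1 : ∀ (p : P) (x : ↥(rightIdealOf E₁.e)), t p x = op x.1 • t p ε₁ := by
    intro p x
    have h : (op x.1 • ε₁ : ↥(rightIdealOf E₁.e)) = x :=
      Subtype.ext (x.2 : E₁.e * x.1 = x.1)
    conv_lhs => rw [← h]
    rw [ht_smul]
  have K3 : ∀ u : T, t (β u) ε₁ = op E₁.e • u := by
    intro u
    have h : ((mkBiAdd t ht_addl ht_addr).flip ε₁).comp β
        = DistribMulAction.toAddMonoidHom T (op E₁.e) :=
      ext_of_gen2 t hTgen (fun p x => by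
        show t (β (t p x)) ε₁ = op E₁.e • t p x
        rw [hβ, ht_bal, ← ht_smul]
        congr 1
        exact Subtype.ext (show x.1 * E₁.e * E₁.e = x.1 * E₁.e by rw [mul_assoc, he₁]))
    exact DFunLike.congr_fun h u
  have Lβc : ∀ (c : Corner E₁) (u : T), β (op c.1 • u) = op c • β u := by
    intro c u
    have h : β.comp (DistribMulAction.toAddMonoidHom T (op c.1))
        = (DistribMulAction.toAddMonoidHom P (op c)).comp β :=
      ext_of_gen2 t hTgen (fun p x => by
        show β (op c.1 • t p x) = op c • β (t p x)
        rw [← ht_smul, hβ, hβ, ← mul_smul, ← MulOpposite.op_mul]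
        congr 2
        refine Subtype.ext ?_
        show (op c.1 • x).1 * E₁.e = x.1 * E₁.e * c.1
        show x.1 * c.1 * E₁.e = x.1 * E₁.e * c.1
        rw [mul_assoc, (c.2.2 : c.1 * E₁.e = c.1), mul_assoc,
          (c.2.1 : E₁.e * c.1 = c.1)])
    exact DFunLike.congr_fun h u
  have L2 : ∀ u : T₁₂, δ (γ u) = u := by
    intro u
    have h : δ.comp γ = AddMonoidHom.id T₁₂ :=
      ext_of_gen2 t₁₂ hT12gen (fun p a => by
        show δ (γ (t₁₂ p a)) = t₁₂ p a
        rw [hγ, hδ]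
        congr 1
        exact Subtype.ext (a.2.2 : a.1 * E₂.e = a.1))
    exact DFunLike.congr_fun h u
  have L3' : ∀ u : T₁₂, op E₂.e • γ u = γ u := by
    intro u
    have h : (DistribMulAction.toAddMonoidHom T (op E₂.e)).comp γ = γ :=
      ext_of_gen2 t₁₂ hT12gen (fun p a => by
        show op E₂.e • γ (t₁₂ p a) = γ (t₁₂ p a)
        rw [hγ, ← ht_smul]
        congr 1
        exact Subtype.ext (show a.1 * E₂.e = a.1 from a.2.2))
    exact DFunLike.congr_fun h u
  have LTG : ∀ (g : Module.End (Corner E₁)ᵐᵒᵖ P) (a : Aᵐᵒᵖ) (u : T),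
      TG g (a • u) = a • TG g u := by
    intro g a u
    have h : (TG g).comp (DistribMulAction.toAddMonoidHom T a)
        = (DistribMulAction.toAddMonoidHom T a).comp (TG g) :=
      ext_of_gen2 t hTgen (fun p x => by
        show TG g (a • t p x) = a • TG g (t p x)
        rw [← ht_smul, hTG, hTG, ht_smul])
    exact DFunLike.congr_fun h u
  have LTH : ∀ (h : P →ₗ[(Corner E₁)ᵐᵒᵖ] ↥(cornerSet₂ E₂.e E₁.e)) (a : Aᵐᵒᵖ) (u : T),
      TH h (a • u) = a • TH h u := by
    intro h a u
    have hh : (TH h).comp (DistribMulAction.toAddMonoidHom T a)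
        = (DistribMulAction.toAddMonoidHom ↥(rightIdealOf E₂.e) a).comp (TH h) :=
      ext_of_gen2 t hTgen (fun p x => by
        show TH h (a • t p x) = a • TH h (t p x)
        rw [← ht_smul, hTH, hTH, cmulI_smulA])
    exact DFunLike.congr_fun hh u
  have LM : ∀ (h : P →ₗ[(Corner E₁)ᵐᵒᵖ] ↥(cornerSet₂ E₂.e E₁.e)) (u : T₁₂),
      TH h (γ u) = inclC E₂ E₂.e (M21 h u) := by
    intro h u
    have hh : (TH h).comp γ = (inclC E₂ E₂.e).comp (M21 h) :=
      ext_of_gen2 t₁₂ hT12gen (fun p a => by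
        show TH h (γ (t₁₂ p a)) = inclC E₂ E₂.e (M21 h (t₁₂ p a))
        rw [hγ, hTH, hM21]
        exact Subtype.ext rfl)
    exact DFunLike.congr_fun hh u
  have L3 : ∀ u : T, γ (δ u) = op E₂.e • u := by
    intro u
    have h : γ.comp δ = DistribMulAction.toAddMonoidHom T (op E₂.e) :=
      ext_of_gen2 t hTgen (fun p x => by
        show γ (δ (t p x)) = op E₂.e • t p x
        rw [hδ, hγ, ← ht_smul]
        exact congrArg (t p) (Subtype.ext rfl))
    exact DFunLike.congr_fun h u
  -- generator bookkeeping on `M = T × e₂A`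
  have hfix₁ : ∀ p : P,
      op E₁.e • ((t p ε₁, 0) : T × ↥(rightIdealOf E₂.e)) = (t p ε₁, 0) := by
    intro p
    refine Prod.ext ?_ (smul_zero _)
    show op E₁.e • t p ε₁ = t p ε₁
    rw [← ht_smul]
    congr 1
    exact Subtype.ext (show E₁.e * E₁.e = E₁.e from he₁)
  have hfix₂ : op E₂.e • ((0, ε₂) : T × ↥(rightIdealOf E₂.e)) = (0, ε₂) := by
    refine Prod.ext (smul_zero _) ?_
    exact Subtype.ext (show E₂.e * E₂.e = E₂.e from he₂)
  have hscal : ∀ (c : Corner E₁) (p : P),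
      ((t (op c • p) ε₁, 0) : T × ↥(rightIdealOf E₂.e)) = op c.1 • (t p ε₁, 0) := by
    intro c p
    refine Prod.ext ?_ (smul_zero _).symm
    show t (op c • p) ε₁ = op c.1 • t p ε₁
    rw [ht_bal, ← ht_smul]
    congr 1
    refine Subtype.ext ?_
    show c.1 * E₁.e = E₁.e * c.1
    rw [(c.2.2 : c.1 * E₁.e = c.1), (c.2.1 : E₁.e * c.1 = c.1)]
  have hKpair : ∀ (p : P) (x : ↥(rightIdealOf E₁.e)),
      ((t p x, 0) : T × ↥(rightIdealOf E₂.e)) = op x.1 • (t p ε₁, 0) :=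
    fun p x => Prod.ext (K1 p x) (smul_zero _).symm
  have hXpair : ∀ x : ↥(rightIdealOf E₂.e),
      ((0, x) : T × ↥(rightIdealOf E₂.e)) = op x.1 • (0, ε₂) := by
    intro x
    refine Prod.ext (smul_zero _).symm ?_
    exact Subtype.ext (x.2 : E₂.e * x.1 = x.1).symm
  -- invariance of the values of an endomorphism on the generators
  have hw1 : ∀ (φ : Module.End Aᵐᵒᵖ (T × ↥(rightIdealOf E₂.e))) (p : P),
      φ (t p ε₁, 0) = op E₁.e • φ (t p ε₁, 0) := by
    intro φ p
    conv_lhs => rw [← hfix₁ p, LinearMap.map_smul]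
  have hw2 : ∀ (φ : Module.End Aᵐᵒᵖ (T × ↥(rightIdealOf E₂.e))),
      φ (0, ε₂) = op E₂.e • φ (0, ε₂) := by
    intro φ
    conv_lhs => rw [← hfix₂, LinearMap.map_smul]
  have hmem21 : ∀ (φ : Module.End Aᵐᵒᵖ (T × ↥(rightIdealOf E₂.e))) (p : P),
      (φ (t p ε₁, 0)).2.1 ∈ cornerSet₂ E₂.e E₁.e := by
    intro φ p
    constructor
    · exact ((φ (t p ε₁, 0)).2.2 : E₂.e * _ = _)
    · exact (congrArg (fun m : T × ↥(rightIdealOf E₂.e) => (m.2 : A)) (hw1 φ p)).symm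
  have hmem22 : ∀ (φ : Module.End Aᵐᵒᵖ (T × ↥(rightIdealOf E₂.e))),
      (φ (0, ε₂)).2.1 ∈ cornerSet₂ E₂.e E₂.e := by
    intro φ
    constructor
    · exact ((φ (0, ε₂)).2.2 : E₂.e * _ = _)
    · exact (congrArg (fun m : T × ↥(rightIdealOf E₂.e) => (m.2 : A)) (hw2 φ)).symm
  -- the forward map
  let Ψf : Module.End Aᵐᵒᵖ (T × ↥(rightIdealOf E₂.e)) →
      Module.End (Corner E₁)ᵐᵒᵖ P × T₁₂ ×
        (P →ₗ[(Corner E₁)ᵐᵒᵖ] ↥(cornerSet₂ E₂.e E₁.e)) × Corner E₂ := fun φ =>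
    ({ toFun := fun p => β (φ (t p ε₁, 0)).1
       map_add' := fun p p' => by
         show β (φ (t (p + p') ε₁, 0)).1 = _
         rw [ht_addl, show ((t p ε₁ + t p' ε₁ : T), (0 : ↥(rightIdealOf E₂.e)))
             = (t p ε₁, 0) + (t p' ε₁, 0) from by rw [Prod.mk_add_mk, add_zero],
           map_add, Prod.fst_add, map_add]
       map_smul' := fun r p => by
         show β (φ (t (op r.unop • p) ε₁, 0)).1 = r • β (φ (t p ε₁, 0)).1
         rw [hscal r.unop p, LinearMap.map_smul]
         change β (op (r.unop).1 • (φ (t p ε₁, 0)).1) = _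
         rw [Lβc, MulOpposite.op_unop] },
     δ (φ (0, ε₂)).1,
     { toFun := fun p => ⟨(φ (t p ε₁, 0)).2.1, hmem21 φ p⟩
       map_add' := fun p p' => by
         refine Subtype.ext ?_
         show (φ (t (p + p') ε₁, 0)).2.1 = (φ (t p ε₁, 0)).2.1 + (φ (t p' ε₁, 0)).2.1
         rw [ht_addl, show ((t p ε₁ + t p' ε₁ : T), (0 : ↥(rightIdealOf E₂.e)))
             = (t p ε₁, 0) + (t p' ε₁, 0) from by rw [Prod.mk_add_mk, add_zero],
           map_add]
         rfl
       map_smul' := fun r p => by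
         refine Subtype.ext ?_
         show (φ (t (op r.unop • p) ε₁, 0)).2.1 = (φ (t p ε₁, 0)).2.1 * (r.unop).1
         rw [hscal r.unop p, LinearMap.map_smul]
         rfl },
     ⟨(φ (0, ε₂)).2.1, hmem22 φ⟩)
  -- the inverse map
  let Φf : (Module.End (Corner E₁)ᵐᵒᵖ P × T₁₂ ×
        (P →ₗ[(Corner E₁)ᵐᵒᵖ] ↥(cornerSet₂ E₂.e E₁.e)) × Corner E₂) →
      Module.End Aᵐᵒᵖ (T × ↥(rightIdealOf E₂.e)) := fun bb =>
    { toFun := fun m => (TG bb.1 m.1 + op m.2.1 • γ bb.2.1,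
        TH bb.2.2.1 m.1 + cmulI (show ↥(cornerSet₂ E₂.e E₂.e) from bb.2.2.2) m.2)
      map_add' := fun m m' => by
        refine Prod.ext ?_ ?_
        · show TG bb.1 (m.1 + m'.1) + op (m.2.1 + m'.2.1) • γ bb.2.1 = _
          rw [map_add, MulOpposite.op_add, add_smul, Prod.fst_add]
          exact add_add_add_comm _ _ _ _
        · show TH bb.2.2.1 (m.1 + m'.1) + cmulI _ (m.2 + m'.2) = _
          rw [map_add, cmulI_addr, Prod.snd_add]
          exact add_add_add_comm _ _ _ _
      map_smul' := fun a m => by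
        refine Prod.ext ?_ ?_
        · show TG bb.1 (a • m.1) + op (m.2.1 * a.unop) • γ bb.2.1
            = (a • ((TG bb.1 m.1 + op m.2.1 • γ bb.2.1,
                TH bb.2.2.1 m.1 + cmulI _ m.2) : T × ↥(rightIdealOf E₂.e))).1
          rw [LTG]
          show _ = a • (TG bb.1 m.1 + op m.2.1 • γ bb.2.1)
          rw [smul_add]
          congr 1
          rw [show (op (m.2.1 * a.unop) : Aᵐᵒᵖ) = a * op m.2.1 from
            (MulOpposite.op_mul m.2.1 a.unop).trans (by rw [MulOpposite.op_unop]),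
            mul_smul]
        · show TH bb.2.2.1 (a • m.1) + cmulI _ (a • m.2)
            = (a • ((TG bb.1 m.1 + op m.2.1 • γ bb.2.1,
                TH bb.2.2.1 m.1 + cmulI _ m.2) : T × ↥(rightIdealOf E₂.e))).2
          rw [LTH, cmulI_smulA]
          show _ = a • (TH bb.2.2.1 m.1 + cmulI _ m.2)
          rw [smul_add] }
  have Φap : ∀ bb (v : T) (x : ↥(rightIdealOf E₂.e)), Φf bb (v, x)
      = (TG bb.1 v + op x.1 • γ bb.2.1,
         TH bb.2.2.1 v + cmulI (show ↥(cornerSet₂ E₂.e E₂.e) from bb.2.2.2) x) :=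
    fun bb v x => rfl
  have zc : ∀ z : ↥(cornerSet₂ E₂.e E₂.e), cmulI z (0 : ↥(rightIdealOf E₂.e)) = 0 :=
    fun z => Subtype.ext (mul_zero z.1)
  -- left inverse
  have ΦΨ : ∀ φ, Φf (Ψf φ) = φ := by
    intro φ
    apply LinearMap.ext
    rintro ⟨v, x⟩
    have hsplit : ((v, x) : T × ↥(rightIdealOf E₂.e)) = (v, 0) + (0, x) := by
      rw [Prod.mk_add_mk, add_zero, zero_add]
    rw [hsplit, map_add, map_add]
    congr 1
    · have h : (Φf (Ψf φ)).toAddMonoidHom.comp (AddMonoidHom.inl T ↥(rightIdealOf E₂.e))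
          = φ.toAddMonoidHom.comp (AddMonoidHom.inl T ↥(rightIdealOf E₂.e)) :=
        ext_of_gen2 t hTgen (fun p x' => by
          show Φf (Ψf φ) (t p x', 0) = φ (t p x', 0)
          show (TG (Ψf φ).1 (t p x') + op (0 : A) • γ (Ψf φ).2.1,
              TH (Ψf φ).2.2.1 (t p x')
                + cmulI (show ↥(cornerSet₂ E₂.e E₂.e) from (Ψf φ).2.2.2) 0)
            = φ (t p x', 0)
          rw [MulOpposite.op_zero, zero_smul, add_zero, zc, add_zero, hTG, hTH]
          rw [hKpair p x', LinearMap.map_smul]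
          refine Prod.ext ?_ ?_
          · show t (β ((φ (t p ε₁, 0)).1)) x' = op x'.1 • (φ (t p ε₁, 0)).1
            rw [K1 (β ((φ (t p ε₁, 0)).1)) x', K3, ← mul_smul, ← MulOpposite.op_mul,
              (x'.2 : E₁.e * x'.1 = x'.1)]
          · exact Subtype.ext rfl)
      exact DFunLike.congr_fun h v
    · rw [hXpair x, LinearMap.map_smul, LinearMap.map_smul]
      congr 1
      show Φf (Ψf φ) (0, ε₂) = φ (0, ε₂)
      show (TG (Ψf φ).1 0 + op E₂.e • γ (Ψf φ).2.1,
          TH (Ψf φ).2.2.1 0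
            + cmulI (show ↥(cornerSet₂ E₂.e E₂.e) from (Ψf φ).2.2.2) ε₂)
        = φ (0, ε₂)
      rw [map_zero, zero_add, map_zero, zero_add]
      refine Prod.ext ?_ ?_
      · show op E₂.e • γ (δ ((φ (0, ε₂)).1)) = (φ (0, ε₂)).1
        rw [L3, ← mul_smul, ← MulOpposite.op_mul, he₂]
        exact (congrArg Prod.fst (hw2 φ)).symm
      · refine Subtype.ext ?_
        show (φ (0, ε₂)).2.1 * E₂.e = (φ (0, ε₂)).2.1
        exact (congrArg (fun m : T × ↥(rightIdealOf E₂.e) => (m.2 : A)) (hw2 φ)).symm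
  -- right inverse
  have ΨΦ : ∀ bb, Ψf (Φf bb) = bb := by
    rintro ⟨g, u, h, c⟩
    refine Prod.ext ?_ (Prod.ext ?_ (Prod.ext ?_ ?_))
    · apply LinearMap.ext; intro p
      show β (((Φf (g, u, h, c)) (t p ε₁, 0)).1) = g p
      show β (TG g (t p ε₁) + op (0 : A) • γ u) = g p
      rw [MulOpposite.op_zero, zero_smul, add_zero, hTG, hβ,
        show cProj E₁ ε₁ = (1 : Corner E₁) from Subtype.ext he₁,
        MulOpposite.op_one, one_smul]
    · show δ (((Φf (g, u, h, c)) (0, ε₂)).1) = u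
      show δ (TG g 0 + op E₂.e • γ u) = u
      rw [map_zero, zero_add, L3', L2]
    · apply LinearMap.ext; intro p
      refine Subtype.ext ?_
      show ((TH h (t p ε₁) + cmulI (show ↥(cornerSet₂ E₂.e E₂.e) from c) 0 :
          ↥(rightIdealOf E₂.e)) : A) = (h p).1
      rw [zc, add_zero, hTH]
      exact (h p).2.2
    · refine Subtype.ext ?_
      show ((TH h 0 + cmulI (show ↥(cornerSet₂ E₂.e E₂.e) from c) ε₂ :
          ↥(rightIdealOf E₂.e)) : A) = c.1
      rw [map_zero, zero_add]
      exact (c.2.2 : c.1 * E₂.e = c.1)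
  -- additivity of the forward map
  have Ψadd : ∀ φ φ', Ψf (φ + φ') = Ψf φ + Ψf φ' := by
    intro φ φ'
    refine Prod.ext ?_ (Prod.ext ?_ (Prod.ext ?_ ?_))
    · apply LinearMap.ext; intro p
      show β (((φ + φ') (t p ε₁, 0)).1) = β ((φ (t p ε₁, 0)).1) + β ((φ' (t p ε₁, 0)).1)
      rw [LinearMap.add_apply, Prod.fst_add, map_add]
    · show δ (((φ + φ') (0, ε₂)).1) = δ ((φ (0, ε₂)).1) + δ ((φ' (0, ε₂)).1)
      rw [LinearMap.add_apply, Prod.fst_add, map_add]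
    · apply LinearMap.ext; intro p
      refine Subtype.ext ?_
      show (((φ + φ') (t p ε₁, 0)).2 : A) = ((φ (t p ε₁, 0)).2 : A) + ((φ' (t p ε₁, 0)).2 : A)
      rw [LinearMap.add_apply, Prod.snd_add]
      rfl
    · refine Subtype.ext ?_
      show (((φ + φ') (0, ε₂)).2 : A) = ((φ (0, ε₂)).2 : A) + ((φ' (0, ε₂)).2 : A)
      rw [LinearMap.add_apply, Prod.snd_add]
      rfl
  -- the four pairings
  let m1112 : Module.End (Corner E₁)ᵐᵒᵖ P → T₁₂ → T₁₂ := fun g u => δ (TG g (γ u))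
  let m1221 : T₁₂ → (P →ₗ[(Corner E₁)ᵐᵒᵖ] ↥(cornerSet₂ E₂.e E₁.e)) →
      Module.End (Corner E₁)ᵐᵒᵖ P := fun u h =>
    { toFun := fun q => β (op (h q).1 • γ u)
      map_add' := fun q q' => by
        show β (op ((h (q + q')).1) • γ u) = _
        rw [map_add]
        show β (op ((h q).1 + (h q').1) • γ u) = _
        rw [MulOpposite.op_add, add_smul, map_add]
      map_smul' := fun r q => by
        show β (op ((h (r • q)).1) • γ u) = r • β (op (h q).1 • γ u)
        rw [LinearMap.map_smul]
        show β (op ((h q).1 * (r.unop).1) • γ u) = _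
        rw [MulOpposite.op_mul, mul_smul, Lβc, MulOpposite.op_unop] }
  let m1222 : T₁₂ → Corner E₂ → T₁₂ := fun u c => δ (op c.1 • γ u)
  let m2112 : (P →ₗ[(Corner E₁)ᵐᵒᵖ] ↥(cornerSet₂ E₂.e E₁.e)) → T₁₂ → Corner E₂ :=
    fun h u => M21 h u
  let m2221 : Corner E₂ → (P →ₗ[(Corner E₁)ᵐᵒᵖ] ↥(cornerSet₂ E₂.e E₁.e)) →
      (P →ₗ[(Corner E₁)ᵐᵒᵖ] ↥(cornerSet₂ E₂.e E₁.e)) := fun c h =>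
    { toFun := fun q => cmul c (h q)
      map_add' := fun q q' => by
        show cmul c (h (q + q')) = _
        rw [map_add]
        exact Subtype.ext (mul_add c.1 (h q).1 (h q').1)
      map_smul' := fun r q => by
        show cmul c (h (r • q)) = r • cmul c (h q)
        rw [LinearMap.map_smul]
        exact Subtype.ext (mul_assoc c.1 (h q).1 (r.unop).1).symm }
  refine ⟨m1112, m1221, m1222, m2112, m2221, ?_, ?_, ?_, ?_, ?_, ?_, ?_, ?_, ?_, ?_⟩
  · intro g u v
    show δ (TG g (γ (u + v))) = δ (TG g (γ u)) + δ (TG g (γ v))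
    rw [map_add, map_add, map_add]
  · intro g p a
    show δ (TG g (γ (t₁₂ p a))) = t₁₂ (g p) a
    rw [hγ, hTG, hδ]
    exact congrArg (t₁₂ (g p)) (Subtype.ext (a.2.2 : a.1 * E₂.e = a.1))
  · intro u v g
    apply LinearMap.ext; intro q
    show β (op (g q).1 • γ (u + v)) = β (op (g q).1 • γ u) + β (op (g q).1 • γ v)
    rw [map_add, smul_add, map_add]
  · intro p a g q
    show β (op (g q).1 • γ (t₁₂ p a)) = op (show Corner E₁ from cmul a (g q)) • p
    rw [hγ, ← ht_smul, hβ]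
    refine congrArg (fun z : Corner E₁ => op z • p) (Subtype.ext ?_)
    show a.1 * (g q).1 * E₁.e = a.1 * (g q).1
    rw [mul_assoc, ((g q).2.2 : (g q).1 * E₁.e = (g q).1)]
  · intro u v c
    show δ (op c.1 • γ (u + v)) = δ (op c.1 • γ u) + δ (op c.1 • γ v)
    rw [map_add, smul_add, map_add]
  · intro p a c
    show δ (op c.1 • γ (t₁₂ p a)) = t₁₂ p (cmul a c)
    rw [hγ, ← ht_smul, hδ]
    refine congrArg (t₁₂ p) (Subtype.ext ?_)
    show a.1 * c.1 * E₂.e = a.1 * c.1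
    rw [mul_assoc, (c.2.2 : c.1 * E₂.e = c.1)]
  · intro g u v
    show M21 g (u + v) = M21 g u + M21 g v
    rw [map_add]
  · intro g p a
    exact hM21 g p a
  · intro c g q
    rfl
  -- the isomorphism and its multiplicativity
  · have key : ∀ aa bb, Ψf (Φf aa * Φf bb)
        = (aa.1 * bb.1 + m1221 aa.2.1 bb.2.2.1,
           m1112 aa.1 bb.2.1 + m1222 aa.2.1 bb.2.2.2,
           aa.2.2.1 ∘ₗ bb.1 + m2221 aa.2.2.2 bb.2.2.1,
           m2112 aa.2.2.1 bb.2.1 + aa.2.2.2 * bb.2.2.2) := by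
      rintro ⟨g₁, u₁, h₁, c₁⟩ ⟨g₂, u₂, h₂, c₂⟩
      have hv1 : ∀ p, (Φf (g₂, u₂, h₂, c₂)) (t p ε₁, 0) = (t (g₂ p) ε₁, cmulI (h₂ p) ε₁) := by
        intro p
        show (TG g₂ (t p ε₁) + op (0 : A) • γ u₂,
            TH h₂ (t p ε₁) + cmulI (show ↥(cornerSet₂ E₂.e E₂.e) from c₂) 0)
          = (t (g₂ p) ε₁, cmulI (h₂ p) ε₁)
        rw [MulOpposite.op_zero, zero_smul, add_zero, zc, add_zero, hTG, hTH]
      have hv2 : (Φf (g₂, u₂, h₂, c₂)) (0, ε₂)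
          = (γ u₂, cmulI (show ↥(cornerSet₂ E₂.e E₂.e) from c₂) ε₂) := by
        show (TG g₂ 0 + op E₂.e • γ u₂,
            TH h₂ 0 + cmulI (show ↥(cornerSet₂ E₂.e E₂.e) from c₂) ε₂)
          = (γ u₂, cmulI (show ↥(cornerSet₂ E₂.e E₂.e) from c₂) ε₂)
        rw [map_zero, zero_add, map_zero, zero_add, L3']
      have hc1 : ∀ p, (Φf (g₁, u₁, h₁, c₁) * Φf (g₂, u₂, h₂, c₂)) (t p ε₁, 0)
          = (TG g₁ (t (g₂ p) ε₁) + op ((h₂ p).1 * E₁.e) • γ u₁,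
             TH h₁ (t (g₂ p) ε₁)
               + cmulI (show ↥(cornerSet₂ E₂.e E₂.e) from c₁) (cmulI (h₂ p) ε₁)) := by
        intro p
        rw [Module.End.mul_apply, hv1]
        rfl
      have hc2 : (Φf (g₁, u₁, h₁, c₁) * Φf (g₂, u₂, h₂, c₂)) (0, ε₂)
          = (TG g₁ (γ u₂) + op (c₂.1 * E₂.e) • γ u₁,
             TH h₁ (γ u₂)
               + cmulI (show ↥(cornerSet₂ E₂.e E₂.e) from c₁)
                 (cmulI (show ↥(cornerSet₂ E₂.e E₂.e) from c₂) ε₂)) := by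
        rw [Module.End.mul_apply, hv2]
        rfl
      refine Prod.ext ?_ (Prod.ext ?_ (Prod.ext ?_ ?_))
      · apply LinearMap.ext; intro p
        show β (((Φf (g₁, u₁, h₁, c₁) * Φf (g₂, u₂, h₂, c₂)) (t p ε₁, 0)).1)
          = g₁ (g₂ p) + β (op (h₂ p).1 • γ u₁)
        rw [hc1 p]
        show β (TG g₁ (t (g₂ p) ε₁) + op ((h₂ p).1 * E₁.e) • γ u₁) = _
        rw [map_add, hTG, hβ, show cProj E₁ ε₁ = (1 : Corner E₁) from Subtype.ext he₁,
          MulOpposite.op_one, one_smul,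
          show (h₂ p).1 * E₁.e = (h₂ p).1 from (h₂ p).2.2]
      · show δ (((Φf (g₁, u₁, h₁, c₁) * Φf (g₂, u₂, h₂, c₂)) (0, ε₂)).1)
          = δ (TG g₁ (γ u₂)) + δ (op c₂.1 • γ u₁)
        rw [hc2]
        show δ (TG g₁ (γ u₂) + op (c₂.1 * E₂.e) • γ u₁) = _
        rw [show c₂.1 * E₂.e = c₂.1 from (c₂.2.2 : c₂.1 * E₂.e = c₂.1), map_add]
      · apply LinearMap.ext; intro p
        refine Subtype.ext ?_
        show ((((Φf (g₁, u₁, h₁, c₁) * Φf (g₂, u₂, h₂, c₂)) (t p ε₁, 0)).2 : A))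
          = (h₁ (g₂ p)).1 + c₁.1 * (h₂ p).1
        rw [hc1 p]
        show (TH h₁ (t (g₂ p) ε₁) : A) + c₁.1 * ((h₂ p).1 * E₁.e)
          = (h₁ (g₂ p)).1 + c₁.1 * (h₂ p).1
        rw [hTH, show (h₂ p).1 * E₁.e = (h₂ p).1 from (h₂ p).2.2]
        show (h₁ (g₂ p)).1 * E₁.e + c₁.1 * (h₂ p).1 = _
        rw [((h₁ (g₂ p)).2.2 : (h₁ (g₂ p)).1 * E₁.e = (h₁ (g₂ p)).1)]
      · refine Subtype.ext ?_
        show ((((Φf (g₁, u₁, h₁, c₁) * Φf (g₂, u₂, h₂, c₂)) (0, ε₂)).2 : A))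
          = (M21 h₁ u₂).1 + c₁.1 * c₂.1
        rw [hc2]
        show (TH h₁ (γ u₂) : A) + c₁.1 * (c₂.1 * E₂.e) = (M21 h₁ u₂).1 + c₁.1 * c₂.1
        rw [LM h₁ u₂, show c₂.1 * E₂.e = c₂.1 from (c₂.2.2 : c₂.1 * E₂.e = c₂.1)]
        rfl
    refine ⟨AddEquiv.mk' ⟨Ψf, Φf, ΦΨ, ΨΦ⟩ Ψadd, ?_⟩
    intro x y
    have e1 : Ψf (x * y) = Ψf (Φf (Ψf x) * Φf (Ψf y)) := by rw [ΦΨ x, ΦΨ y]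
    exact e1.trans (key (Ψf x) (Ψf y))
end

section
/- Let F be a skew field (division ring), R = Mat(d, F), and U the simple R-module. Then for L = U^r, M = U^m, N = U^n, the normal Munn algebra 𝕄(R, L, M, N) is isomorphic as a ring to 𝕄(F, F^r, F^m, F^n); in particular it depends only on r, m, n and not on d. -/
/-- The Munn algebra `𝕄(R, M, N, μ)`: the additive group `Hom_R(M, N)` equipped with the
sandwich multiplication `a ⋅ b = a ∘ μ ∘ b`. -/
@[nolint unusedArguments]
def Munn {R M N : Type*} [Ring R] [AddCommGroup M] [AddCommGroup N] [Module R M]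
    [Module R N] (_ : N →ₗ[R] M) : Type _ := M →ₗ[R] N

namespace Munn

variable {R M N : Type*} [Ring R] [AddCommGroup M] [AddCommGroup N] [Module R M]
  [Module R N] (μ : N →ₗ[R] M)

instance : AddCommGroup (Munn μ) := inferInstanceAs (AddCommGroup (M →ₗ[R] N))

/-- Regard an element of the Munn algebra as a linear map. -/
def toHom (a : Munn μ) : M →ₗ[R] N := a

/-- Regard a linear map as an element of the Munn algebra. -/
def ofHom (a : M →ₗ[R] N) : Munn μ := a

instance : NonUnitalRing (Munn μ) :=
  { (inferInstanceAs (AddCommGroup (M →ₗ[R] N)) : AddCommGroup (M →ₗ[R] N)) with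
    mul := fun a b => ofHom μ ((toHom μ a) ∘ₗ μ ∘ₗ (toHom μ b))
    left_distrib := fun a b c => LinearMap.ext fun x => by
      show (toHom μ a) (μ ((toHom μ b + toHom μ c) x)) =
        (toHom μ a) (μ ((toHom μ b) x)) + (toHom μ a) (μ ((toHom μ c) x))
      simp
    right_distrib := fun a b c => LinearMap.ext fun x => by
      show (toHom μ a + toHom μ b) (μ ((toHom μ c) x)) =
        (toHom μ a) (μ ((toHom μ c) x)) + (toHom μ b) (μ ((toHom μ c) x))
      simp
    zero_mul := fun a => LinearMap.ext fun x => by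
      show (0 : M →ₗ[R] N) (μ ((toHom μ a) x)) = 0
      simp
    mul_zero := fun a => LinearMap.ext fun x => by
      show (toHom μ a) (μ ((0 : M →ₗ[R] N) x)) = 0
      simp
    mul_assoc := fun a b c => LinearMap.ext fun _ => rfl }

theorem mul_def (a b : Munn μ) : a * b = ofHom μ ((toHom μ a) ∘ₗ μ ∘ₗ (toHom μ b)) := rfl

end Munn

/-- The canonical sandwich homomorphism `μ = [[1_L, 0], [0, 0]] : L ⊕ N → L ⊕ M`,
`(l, n) ↦ (l, 0)`, defining the normal Munn algebra `𝕄(R, L, M, N)`. -/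
def normalMu (R L M N : Type*) [Ring R] [AddCommGroup L] [AddCommGroup M] [AddCommGroup N]
    [Module R L] [Module R M] [Module R N] : (L × N) →ₗ[R] (L × M) :=
  (LinearMap.inl R L M) ∘ₗ (LinearMap.fst R L N)

section SimpleModule

variable {d : ℕ} {F : Type*} [DivisionRing F]

/-- The natural action of `Mat(d, F)` on column vectors `F^d`. -/
instance matrixSMulVec : SMul (Matrix (Fin d) (Fin d) F) (Fin d → F) := ⟨Matrix.mulVec⟩

/-- `F^d` as the (simple) module over `R = Mat(d, F)`. -/
instance matrixModuleVec : Module (Matrix (Fin d) (Fin d) F) (Fin d → F) where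
  one_smul v := Matrix.one_mulVec v
  mul_smul A B v := (Matrix.mulVec_mulVec v A B).symm
  smul_zero A := Matrix.mulVec_zero A
  smul_add A u v := Matrix.mulVec_add A u v
  add_smul A B v := Matrix.add_mulVec A B v
  zero_smul v := Matrix.zero_mulVec v

end SimpleModule
namespace MunnAux

variable {F : Type*} [DivisionRing F] {d : ℕ} [NeZero d]

local notation "R" => Matrix (Fin d) (Fin d) F
local notation "U" => Fin d → F

omit [NeZero d] in
lemma smul_eq_mulVec (A : R) (v : U) : A • v = A.mulVec v := rfl

lemma stdBasis_smul (k : Fin d) (c : F) (v : U) :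
    (Matrix.single (0 : Fin d) k c) • v = Pi.single 0 (c * v k) := by
  funext l
  show (Matrix.single (0 : Fin d) k c).mulVec v l = _
  simp [Matrix.mulVec, dotProduct, Matrix.single, Pi.single_apply, ite_and,
    Finset.sum_ite_eq, eq_comm]

lemma stdBasis_mulVec (k : Fin d) (c : F) (v : U) :
    (Matrix.single (0 : Fin d) k c).mulVec v = Pi.single 0 (c * v k) := stdBasis_smul k c v

variable {α β γ δ : Type*}

/-- include `F^α` into `U^α` in row `0`. -/
def sngl (x : α → F) : α → U := fun i => Pi.single 0 (x i)

/-- project `U^α` onto row `0`. -/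
def prjn (w : α → U) : α → F := fun i => w i 0

def sp (p : (α → F) × (β → F)) : (α → U) × (β → U) := (sngl p.1, sngl p.2)

def pp (q : (α → U) × (β → U)) : (α → F) × (β → F) := (prjn q.1, prjn q.2)

/-- row `k` of a pair of `U`-tuples. -/
def rowp (k : Fin d) (q : (α → U) × (β → U)) : (α → F) × (β → F) :=
  (fun i => q.1 i k, fun i => q.2 i k)

lemma sp_add (p q : (α → F) × (β → F)) :
    sp (p + q) = (sp p + sp q : (α → U) × (β → U)) := by
  refine Prod.ext ?_ ?_ <;> funext i <;>
    simp [sp, sngl, Pi.single_add]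

lemma sp_smul (c : F) (p : (α → F) × (β → F)) :
    sp (c • p) = (Matrix.single (0 : Fin d) (0 : Fin d) c) •
      (sp p : (α → U) × (β → U)) := by
  refine Prod.ext ?_ ?_ <;> funext i <;>
    simp [sp, sngl, stdBasis_smul, stdBasis_mulVec, Pi.smul_apply, -Matrix.mulVec_single]

lemma pp_add (q q' : (α → U) × (β → U)) : pp (q + q') = pp q + pp q' := by
  refine Prod.ext ?_ ?_ <;> funext i <;> simp [pp, prjn]

lemma pp_smul (c : F) (q : (α → U) × (β → U)) :
    pp ((Matrix.single (0 : Fin d) (0 : Fin d) c) • q) = c • pp q := by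
  refine Prod.ext ?_ ?_ <;> funext i <;>
    simp [pp, prjn, stdBasis_smul, stdBasis_mulVec, Pi.smul_apply]

lemma sp_rowp (k : Fin d) (q : (α → U) × (β → U)) :
    sp (rowp k q) = (Matrix.single (0 : Fin d) k (1 : F)) • q := by
  refine Prod.ext ?_ ?_ <;> funext i <;>
    simp [sp, sngl, rowp, stdBasis_smul, stdBasis_mulVec]

lemma rowp_sp (p : (α → F) × (β → F)) :
    rowp (0 : Fin d) (sp p : (α → U) × (β → U)) = p := by
  refine Prod.ext ?_ ?_ <;> funext i <;> simp [sp, sngl, rowp]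

lemma sp_pp (q : (α → U) × (β → U)) :
    sp (pp q) = (Matrix.single (0 : Fin d) (0 : Fin d) (1 : F)) • q := by
  exact sp_rowp (0 : Fin d) q

lemma pp_Esmul (q : (α → U) × (β → U)) :
    pp ((Matrix.single (0 : Fin d) (0 : Fin d) (1 : F)) • q) = pp q := by
  simpa using pp_smul (1 : F) q

omit [NeZero d] in
lemma rowp_smul (A : R) (k : Fin d) (q : (α → U) × (β → U)) :
    rowp k (A • q) = ∑ l, A k l • rowp l q := by
  refine Prod.ext ?_ ?_ <;> funext i <;>
    simp [rowp, smul_eq_mulVec, Matrix.mulVec, dotProduct, Finset.sum_apply,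
      Prod.fst_sum, Prod.snd_sum, Pi.smul_apply, smul_eq_mul]

/-- The forward map of the isomorphism. -/
def Phi (f : ((α → U) × (β → U)) →ₗ[R] ((γ → U) × (δ → U))) :
    ((α → F) × (β → F)) →ₗ[F] ((γ → F) × (δ → F)) where
  toFun p := pp (f (sp p))
  map_add' p q := by simp only [sp_add, map_add, pp_add]
  map_smul' c p := by simp only [sp_smul, map_smul, pp_smul, RingHom.id_apply]

lemma Phi_apply (f : ((α → U) × (β → U)) →ₗ[R] ((γ → U) × (δ → U)))
    (p : (α → F) × (β → F)) : Phi f p = pp (f (sp p)) := rfl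

/-- The inverse map of the isomorphism. -/
def Psi (g : ((α → F) × (β → F)) →ₗ[F] ((γ → F) × (δ → F))) :
    ((α → U) × (β → U)) →ₗ[R] ((γ → U) × (δ → U)) where
  toFun q := (fun j k => (g (rowp k q)).1 j, fun j k => (g (rowp k q)).2 j)
  map_add' q q' := by
    have h : ∀ k, rowp (α := α) (β := β) k (q + q') = rowp k q + rowp k q' := by
      intro k; refine Prod.ext ?_ ?_ <;> funext i <;> simp [rowp]
    refine Prod.ext ?_ ?_ <;> funext j k <;> simp [h, map_add]
  map_smul' A q := by
    refine Prod.ext ?_ ?_ <;> funext j k <;>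
      simp [rowp_smul, map_sum, map_smul, smul_eq_mulVec, Matrix.mulVec, dotProduct,
        Finset.sum_apply, Prod.fst_sum, Prod.snd_sum]

omit [NeZero d] in
lemma Psi_apply (g : ((α → F) × (β → F)) →ₗ[F] ((γ → F) × (δ → F)))
    (q : (α → U) × (β → U)) :
    Psi g q = (fun j k => (g (rowp k q)).1 j, fun j k => (g (rowp k q)).2 j) := rfl

end MunnAux

/-- For `R = Mat(d, F)` (`F` a skew field, `d ≥ 1`) and `U = F^d` the simple `R`-module,
the normal Munn algebra `𝕄(R, U^r, U^m, U^n)` is isomorphic as a ring to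
`𝕄(F, F^r, F^m, F^n)`; in particular it depends only on `r, m, n` and not on `d`. -/
theorem munn_matrix_ring_reduction (F : Type*) [DivisionRing F] (d : ℕ) (hd : 0 < d)
    (r m n : ℕ) :
    Nonempty
      (Munn (normalMu (Matrix (Fin d) (Fin d) F)
          (Fin r → (Fin d → F)) (Fin m → (Fin d → F)) (Fin n → (Fin d → F))) ≃+*
        Munn (normalMu F (Fin r → F) (Fin m → F) (Fin n → F))) := by
  haveI : NeZero d := ⟨hd.ne'⟩
  open MunnAux in
  refine ⟨{ toFun := fun f => Munn.ofHom _ (Phi (Munn.toHom _ f)),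
            invFun := fun g => Munn.ofHom _ (Psi (Munn.toHom _ g)),
            left_inv := ?_, right_inv := ?_, map_add' := ?_, map_mul' := ?_ }⟩
  · intro f
    refine LinearMap.ext fun q => ?_
    show Psi (Phi (Munn.toHom _ f)) q = Munn.toHom _ f q
    rw [Psi_apply]
    refine Prod.ext ?_ ?_ <;> funext j k <;>
      simp [Phi_apply, sp_rowp, map_smul, pp, prjn, Prod.smul_fst, Prod.smul_snd,
        Pi.smul_apply, stdBasis_smul, stdBasis_mulVec]
  · intro g
    refine LinearMap.ext fun p => ?_
    show Phi (Psi (Munn.toHom _ g)) p = Munn.toHom _ g p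
    refine Prod.ext ?_ ?_ <;> funext j <;>
      simp [Phi_apply, Psi_apply, pp, prjn, rowp_sp]
  · intro a b
    refine LinearMap.ext fun p => ?_
    set A := Munn.toHom _ a
    set B := Munn.toHom _ b
    show Phi (A ∘ₗ (normalMu _ _ _ _) ∘ₗ B) p = Phi A ((normalMu F _ _ _) (Phi B p))
    simp only [Phi_apply, LinearMap.comp_apply, normalMu, LinearMap.coe_comp,
      Function.comp_apply, LinearMap.fst_apply, LinearMap.inl_apply]
    have h1 : sp (((pp (B (sp p))).1 : Fin r → F), (0 : Fin m → F)) =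
        (Matrix.single (0 : Fin d) (0 : Fin d) (1 : F)) •
          (((B (sp p)).1 : Fin r → (Fin d → F)), (0 : Fin m → (Fin d → F))) := by
      refine Prod.ext ?_ ?_ <;> funext i <;>
        simp [sp, sngl, pp, prjn, stdBasis_smul, stdBasis_mulVec, Prod.smul_fst, Prod.smul_snd,
          Pi.smul_apply]
    rw [h1, map_smul, pp_Esmul]
  · intro a b
    refine LinearMap.ext fun p => ?_
    show Phi (Munn.toHom _ a + Munn.toHom _ b) p =
      Phi (Munn.toHom _ a) p + Phi (Munn.toHom _ b) p
    simp [Phi_apply, pp_add]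
end

section
/- Let μ : N → M be a von Neumann regular homomorphism of R-modules. If every Munn algebra isomorphic to 𝕄(R, N', M', μ') with μ' of the block form [[1_L, 0],[0,0]] for some decomposition is called normal, then every Munn algebra 𝕄(R, M, N, μ) with μ regular is isomorphic as a (non-unital) ring to a normal Munn algebra 𝕄(R, L, M', N') with L = Im μ. -/
/-- Every Munn algebra `𝕄(R, M, N, μ)` with `μ` von Neumann regular is isomorphic as a
(non-unital) ring to a normal Munn algebra `𝕄(R, L, M', N')` with `L = Im μ`. -/
theorem regular_munn_iso_normal
    {R M N : Type*} [Ring R] [AddCommGroup M] [AddCommGroup N] [Module R M] [Module R N]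
    (μ : N →ₗ[R] M) (h : ∃ θ : M →ₗ[R] N, μ ∘ₗ θ ∘ₗ μ = μ) :
    ∃ (M' : Submodule R M) (N' : Submodule R N),
      Nonempty (Munn μ ≃+* Munn (normalMu R ↥(LinearMap.range μ) ↥M' ↥N')) := by
  obtain ⟨θ, hθ⟩ := h
  have key : ∀ x : N, μ (θ (μ x)) = μ x := fun x => by
    simpa using LinearMap.congr_fun hθ x
  set L := LinearMap.range μ with hL
  refine ⟨LinearMap.ker (μ ∘ₗ θ), LinearMap.ker μ, ⟨?_⟩⟩
  set M' := LinearMap.ker (μ ∘ₗ θ)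
  set N' := LinearMap.ker μ
  -- the equivalence M ≃ L × M'
  have hmemM : ∀ m : M, m - μ (θ m) ∈ M' := fun m => by
    simp only [M', LinearMap.mem_ker, LinearMap.coe_comp, Function.comp_apply, map_sub]
    rw [key (θ m), sub_self]
  have hmemL : ∀ m : M, μ (θ m) ∈ L := fun m => ⟨θ m, rfl⟩
  let eM : M ≃ₗ[R] (L × M') :=
    LinearEquiv.ofLinear
      (LinearMap.prod ((μ ∘ₗ θ).codRestrict L hmemL)
        ((LinearMap.id - μ ∘ₗ θ).codRestrict M' (fun m => by
          simpa using hmemM m)))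
      (L.subtype ∘ₗ LinearMap.fst R L M' + M'.subtype ∘ₗ LinearMap.snd R L M')
      (by
        apply LinearMap.ext
        rintro ⟨⟨l, n, rfl⟩, ⟨m, hm⟩⟩
        simp only [M', LinearMap.mem_ker, LinearMap.coe_comp, Function.comp_apply] at hm
        ext <;>
          simp [LinearMap.codRestrict, key, hm]
        )
      (by
        apply LinearMap.ext
        intro m
        simp [LinearMap.codRestrict])
  -- the equivalence N ≃ L × N'
  have hmemN : ∀ n : N, n - θ (μ n) ∈ N' := fun n => by
    simp [N', LinearMap.mem_ker, map_sub, key]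
  let eN : N ≃ₗ[R] (L × N') :=
    LinearEquiv.ofLinear
      (LinearMap.prod (μ.codRestrict L (fun n => ⟨n, rfl⟩))
        ((LinearMap.id - θ ∘ₗ μ).codRestrict N' (fun n => by simpa using hmemN n)))
      ((θ ∘ₗ L.subtype) ∘ₗ LinearMap.fst R L N' + N'.subtype ∘ₗ LinearMap.snd R L N')
      (by
        apply LinearMap.ext
        rintro ⟨⟨l, n, rfl⟩, ⟨x, hx⟩⟩
        simp only [N', LinearMap.mem_ker] at hx
        ext <;> simp [LinearMap.codRestrict, key, hx]
        )
      (by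
        apply LinearMap.ext
        intro n
        simp [LinearMap.codRestrict])
  -- key compatibility : eM.symm (μ₀ (eN n)) = μ n
  have key2 : ∀ n : N, eM.symm (normalMu R ↥L ↥M' ↥N' (eN n)) = μ n := by
    intro n
    simp [eM, eN, normalMu, LinearMap.codRestrict]
  refine
    { toFun := fun a =>
        Munn.ofHom _ (eN.toLinearMap ∘ₗ Munn.toHom μ a ∘ₗ eM.symm.toLinearMap)
      invFun := fun b =>
        Munn.ofHom μ (eN.symm.toLinearMap ∘ₗ
          Munn.toHom (normalMu R ↥L ↥M' ↥N') b ∘ₗ eM.toLinearMap)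
      left_inv := fun a => by
        show Munn.ofHom μ _ = a
        apply LinearMap.ext
        intro m
        simp [Munn.ofHom, Munn.toHom]
        exact congrArg (Munn.toHom μ a) (eM.symm_apply_apply m)
      right_inv := fun b => by
        show Munn.ofHom _ _ = b
        apply LinearMap.ext
        intro x
        simp [Munn.ofHom, Munn.toHom]
        exact congrArg (Munn.toHom (normalMu R ↥L ↥M' ↥N') b) (eM.apply_symm_apply x)
      map_add' := fun a b => by
        show Munn.ofHom _ _ = Munn.ofHom _ _ + Munn.ofHom _ _
        apply LinearMap.ext
        intro m
        show eN ((Munn.toHom μ a + Munn.toHom μ b) (eM.symm m)) = _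
        simp only [LinearMap.add_apply, map_add]
        rfl
      map_mul' := fun a b => by
        show Munn.ofHom _ _ = Munn.ofHom _ _ * Munn.ofHom _ _
        rw [Munn.mul_def]
        apply LinearMap.ext
        intro m
        show eN ((Munn.toHom μ (a * b)) (eM.symm m)) = _
        rw [Munn.mul_def]
        show eN ((Munn.toHom μ a) (μ ((Munn.toHom μ b) (eM.symm m)))) =
          eN ((Munn.toHom μ a) (eM.symm (normalMu R ↥L ↥M' ↥N'
            (eN ((Munn.toHom μ b) (eM.symm m))))))
        rw [key2] }
end

section
/- Let μ be a nonzero p × q matrix over a group G (entries in G⁰ = G ∪ {0}). Then by elementary row and column transformations (permutations and, over the group algebra, operations preserving the ranks of all Wedderburn components) one can transform μ into a matrix μ' which is regular, i.e., every row and every column of μ' contains a nonzero entry; consequently, for any field k with char k ∤ |G|, the semigroup algebras k𝒦(G, p, q, μ) and k𝒦(G, p, q, μ') are isomorphic, and 𝒦(G, p, q, μ') is a 0-simple semigroup. -/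
universe w

variable {G : Type*} [Group G] {p q : ℕ}

/-- The product of two nonzero elements `(i, g, λ)`, `(j, h, ν)` of the Rees matrix
semigroup `𝒦(G, p, q, μ)` with sandwich matrix `μ` over `G⁰ = G ∪ {0}`:
it is `(i, g·μ(λ,j)·h, ν)` if `μ(λ,j) ≠ 0`, and zero (`none`) otherwise. -/
def reesProd (μ : Matrix (Fin p) (Fin q) (Option G))
    (x y : Fin q × G × Fin p) : Option (Fin q × G × Fin p) :=
  (μ x.2.2 y.1).map fun g0 => (x.1, x.2.1 * g0 * y.2.1, y.2.2)

/-- The multiplication of the Rees matrix semigroup `𝒦(G, p, q, μ)` (with zero `none`). -/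
def reesMul (μ : Matrix (Fin p) (Fin q) (Option G))
    (x y : Option (Fin q × G × Fin p)) : Option (Fin q × G × Fin p) :=
  x.bind fun a => y.bind fun b => reesProd μ a b

/-- The sandwich matrix `μ` is regular: every row and every column contains a nonzero
entry. -/
def IsRegularSandwich (μ : Matrix (Fin p) (Fin q) (Option G)) : Prop :=
  (∀ a : Fin p, ∃ b : Fin q, μ a b ≠ none) ∧ (∀ b : Fin q, ∃ a : Fin p, μ a b ≠ none)

/-- The Rees matrix semigroup `𝒦(G, p, q, μ)` is `0`-simple: its square is nonzero and its
only two-sided ideals are `{0}` and the whole semigroup. -/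
def IsZeroSimpleRees (μ : Matrix (Fin p) (Fin q) (Option G)) : Prop :=
  (∃ x y, reesMul μ x y ≠ none) ∧
  ∀ I : Set (Option (Fin q × G × Fin p)), none ∈ I →
    (∀ a ∈ I, ∀ s, reesMul μ s a ∈ I ∧ reesMul μ a s ∈ I) →
    I = {none} ∨ I = Set.univ

/-- The multiplication of the contracted semigroup algebra `k𝒦(G, p, q, μ)`: the `k`-vector
space with basis the nonzero elements of `𝒦(G, p, q, μ)`, products falling onto the
semigroup zero being identified with `0`. -/
noncomputable def contractedMul (K : Type w) [Field K]
    (μ : Matrix (Fin p) (Fin q) (Option G))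
    (f g : (Fin q × G × Fin p) →₀ K) : (Fin q × G × Fin p) →₀ K :=
  f.sum fun x cx => g.sum fun y cy =>
    match reesProd μ x y with
    | some z => Finsupp.single z (cx * cy)
    | none => 0


open Finsupp Matrix

section Aux

variable [Fintype G] (K : Type w) [Field K]

noncomputable def toMat (f : (Fin q × G × Fin p) →₀ K) :
    Matrix (Fin q) (Fin p) (MonoidAlgebra K G) :=
  Matrix.of fun j a => MonoidAlgebra.ofCoeff (Finsupp.equivFunOnFinite.symm fun g => f (j, g, a))

noncomputable def ofMat (M : Matrix (Fin q) (Fin p) (MonoidAlgebra K G)) :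
    (Fin q × G × Fin p) →₀ K :=
  Finsupp.equivFunOnFinite.symm fun x => (M x.1 x.2.2).coeff x.2.1

@[simp] lemma toMat_apply (f : (Fin q × G × Fin p) →₀ K) (j : Fin q) (a : Fin p) (h : G) :
    (toMat K f j a).coeff h = f (j, h, a) := rfl

@[simp] lemma ofMat_apply (M : Matrix (Fin q) (Fin p) (MonoidAlgebra K G))
    (x : Fin q × G × Fin p) : ofMat K M x = (M x.1 x.2.2).coeff x.2.1 := rfl

@[simp] lemma ofMat_toMat (f : (Fin q × G × Fin p) →₀ K) : ofMat K (toMat K f) = f := by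
  ext x; simp

@[simp] lemma toMat_ofMat (M : Matrix (Fin q) (Fin p) (MonoidAlgebra K G)) :
    toMat K (ofMat K M) = M := by
  ext j a h; simp

@[simp] lemma toMat_zero : toMat K (0 : (Fin q × G × Fin p) →₀ K) = 0 := by
  ext j a h; simp

lemma toMat_add (f g : (Fin q × G × Fin p) →₀ K) :
    toMat K (f + g) = toMat K f + toMat K g := by
  ext j a h; rfl

lemma ofMat_add (M N : Matrix (Fin q) (Fin p) (MonoidAlgebra K G)) :
    ofMat K (M + N) = ofMat K M + ofMat K N := by
  ext x; rfl

lemma toMat_smul (c : K) (f : (Fin q × G × Fin p) →₀ K) :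
    toMat K (c • f) = c • toMat K f := by
  ext j a h; rfl

lemma ofMat_smul (c : K) (M : Matrix (Fin q) (Fin p) (MonoidAlgebra K G)) :
    ofMat K (c • M) = c • ofMat K M := by
  ext x; rfl

lemma toMat_single (j : Fin q) (g : G) (a : Fin p) (c : K) :
    toMat K (Finsupp.single (j, g, a) c) = Matrix.single j a (MonoidAlgebra.single g c) := by
  classical
  ext j' a' h
  rw [toMat_apply, Matrix.single_apply]
  split_ifs with hh
  · obtain ⟨rfl, rfl⟩ := hh
    simp [MonoidAlgebra.coeff_single, Finsupp.single_apply]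
  · rw [Finsupp.single_apply, if_neg (fun he => by simp only [Prod.mk.injEq] at he; exact hh ⟨he.1, he.2.2⟩)]
    simp

/-- the sandwich matrix over the monoid algebra -/
noncomputable def sand (μ : Matrix (Fin p) (Fin q) (Option G)) :
    Matrix (Fin p) (Fin q) (MonoidAlgebra K G) :=
  Matrix.of fun a b => (μ a b).elim 0 fun g => MonoidAlgebra.single g 1

lemma Matrix.single_mul_left {l m n : Type*}
    [Fintype m] [DecidableEq l] [DecidableEq m]
    (i : l) (j : m) (u : MonoidAlgebra K G) (S : Matrix m n (MonoidAlgebra K G)) (a : l) (b : n) :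
    (Matrix.single i j u * S) a b = if a = i then u * S j b else 0 := by
  simp only [Matrix.mul_apply, Matrix.single, Matrix.of_apply, ite_mul, zero_mul, ite_and]
  rcases eq_or_ne a i with rfl | h
  · simp
  · rw [Finset.sum_eq_zero]
    · simp [h]
    · intro d _
      rw [if_neg (fun hh => h hh.symm)]

lemma Matrix.single_mul_right {l' m n : Type*}
    [Fintype m] [DecidableEq m] [DecidableEq n]
    (k : m) (l : n) (v : MonoidAlgebra K G) (S : Matrix l' m (MonoidAlgebra K G)) (a : l') (b : n) :
    (S * Matrix.single k l v) a b = if b = l then S a k * v else 0 := by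
  simp only [Matrix.mul_apply, Matrix.single, Matrix.of_apply, mul_ite, mul_zero, ite_and]
  rcases eq_or_ne b l with rfl | h
  · simp
  · rw [Finset.sum_eq_zero]
    · simp [h]
    · intro d _
      split_ifs with h1 h2
      · exact absurd h2.symm h
      · rfl
      · rfl

lemma Matrix.single_sandwich {m n : Type*}
    [Fintype m] [Fintype n] [DecidableEq m] [DecidableEq n]
    (i : m) (j : n) (u : MonoidAlgebra K G) (S : Matrix n m (MonoidAlgebra K G))
    (k : m) (l : n) (v : MonoidAlgebra K G) :
    Matrix.single i j u * S * Matrix.single k l v = Matrix.single i l (u * S j k * v) := by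
  ext a b
  rw [Matrix.single_mul_right, Matrix.single_mul_left]
  simp only [Matrix.single, Matrix.of_apply, ite_mul, zero_mul]
  by_cases h1 : a = i <;> by_cases h2 : b = l <;> simp_all [eq_comm]

lemma fsum_eq_zero {α M N : Type*} [Zero M] [AddCommMonoid N] {f : α →₀ M} {h : α → M → N}
    (H : ∀ a b, h a b = 0) : f.sum h = 0 :=
  Finset.sum_eq_zero fun a _ => H a (f a)

lemma contractedMul_zero_left (μ : Matrix (Fin p) (Fin q) (Option G))
    (g : (Fin q × G × Fin p) →₀ K) : contractedMul K μ 0 g = 0 := by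
  simp [contractedMul]

lemma contractedMul_zero_right (μ : Matrix (Fin p) (Fin q) (Option G))
    (f : (Fin q × G × Fin p) →₀ K) : contractedMul K μ f 0 = 0 := by
  unfold contractedMul
  apply fsum_eq_zero
  intro x _
  exact Finsupp.sum_zero_index

lemma contractedMul_single_left (μ : Matrix (Fin p) (Fin q) (Option G))
    (x : Fin q × G × Fin p) (cx : K) (g : (Fin q × G × Fin p) →₀ K) :
    contractedMul K μ (Finsupp.single x cx) g =
      g.sum fun y cy => match reesProd μ x y with
        | Option.some z => Finsupp.single z (cx * cy)
        | Option.none => 0 := by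
  unfold contractedMul
  apply Finsupp.sum_single_index
  apply fsum_eq_zero
  intro y _
  cases reesProd μ x y <;> simp

lemma contractedMul_single_single (μ : Matrix (Fin p) (Fin q) (Option G))
    (x y : Fin q × G × Fin p) (cx cy : K) :
    contractedMul K μ (Finsupp.single x cx) (Finsupp.single y cy) =
      match reesProd μ x y with
      | Option.some z => Finsupp.single z (cx * cy)
      | Option.none => 0 := by
  rw [contractedMul_single_left]
  apply Finsupp.sum_single_index
  cases h : reesProd μ x y with
  | none => simp [h]
  | some z => simp [h]

lemma contractedMul_add_left (μ : Matrix (Fin p) (Fin q) (Option G))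
    (f₁ f₂ g : (Fin q × G × Fin p) →₀ K) :
    contractedMul K μ (f₁ + f₂) g = contractedMul K μ f₁ g + contractedMul K μ f₂ g := by
  unfold contractedMul
  apply Finsupp.sum_add_index'
  · intro x
    apply fsum_eq_zero
    intro y _
    cases reesProd μ x y <;> simp
  · intro x b₁ b₂
    rw [← Finsupp.sum_add]
    apply Finsupp.sum_congr
    intro y _
    cases reesProd μ x y <;> simp [add_mul, Finsupp.single_add]

lemma contractedMul_add_right (μ : Matrix (Fin p) (Fin q) (Option G))
    (f g₁ g₂ : (Fin q × G × Fin p) →₀ K) :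
    contractedMul K μ f (g₁ + g₂) = contractedMul K μ f g₁ + contractedMul K μ f g₂ := by
  unfold contractedMul
  rw [← Finsupp.sum_add]
  apply Finsupp.sum_congr
  intro x _
  apply Finsupp.sum_add_index'
  · intro y
    cases reesProd μ x y <;> simp
  · intro y b₁ b₂
    cases reesProd μ x y <;> simp [mul_add, Finsupp.single_add]

lemma toMat_contractedMul_single (μ : Matrix (Fin p) (Fin q) (Option G))
    (x : Fin q × G × Fin p) (cx : K) (g : (Fin q × G × Fin p) →₀ K) :
    toMat K (contractedMul K μ (Finsupp.single x cx) g) =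
      toMat K (Finsupp.single x cx) * sand K μ * toMat K g := by
  induction g using Finsupp.induction with
  | zero => simp [contractedMul_zero_right]
  | single_add y cy g _ _ ihg =>
    rw [contractedMul_add_right, toMat_add, toMat_add, ihg, Matrix.mul_add]
    congr 1
    rw [contractedMul_single_single]
    obtain ⟨jx, gx, ax⟩ := x
    obtain ⟨jy, gy, ay⟩ := y
    rw [toMat_single, toMat_single, Matrix.single_sandwich]
    rcases hm : μ ax jy with - | g0
    · simp [reesProd, hm, sand]
    · simp only [reesProd, hm, Option.map_some]
      rw [toMat_single]
      simp only [sand, Matrix.of_apply, hm, Option.elim]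
      rw [MonoidAlgebra.single_mul_single, MonoidAlgebra.single_mul_single, mul_one]

lemma toMat_contractedMul (μ : Matrix (Fin p) (Fin q) (Option G))
    (f g : (Fin q × G × Fin p) →₀ K) :
    toMat K (contractedMul K μ f g) = toMat K f * sand K μ * toMat K g := by
  induction f using Finsupp.induction with
  | zero => simp [contractedMul_zero_left]
  | single_add x cx f _ _ ih =>
    rw [contractedMul_add_left, toMat_add, toMat_add, ih, Matrix.add_mul, Matrix.add_mul,
      toMat_contractedMul_single]

end Aux

section Reg
open scoped Classical

variable [Fintype G]

noncomputable def mu1 (μ : Matrix (Fin p) (Fin q) (Option G)) (a₀ : Fin p) :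
    Matrix (Fin p) (Fin q) (Option G) :=
  Matrix.of fun a b => if ∃ b', μ a b' ≠ none then μ a b else μ a₀ b

noncomputable def mu2 (μ : Matrix (Fin p) (Fin q) (Option G)) (a₀ : Fin p) (b₀ : Fin q) :
    Matrix (Fin p) (Fin q) (Option G) :=
  Matrix.of fun a b =>
    if ∃ a', mu1 μ a₀ a' b ≠ none then mu1 μ a₀ a b else mu1 μ a₀ a b₀

lemma mu1_a₀ (μ : Matrix (Fin p) (Fin q) (Option G)) (a₀ : Fin p) (b : Fin q) :
    mu1 μ a₀ a₀ b = μ a₀ b := by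
  simp only [mu1, Matrix.of_apply, ite_self]

lemma mu1_row (μ : Matrix (Fin p) (Fin q) (Option G)) {a₀ : Fin p} {b₀ : Fin q}
    (h₀ : μ a₀ b₀ ≠ none) (a : Fin p) : ∃ b, mu1 μ a₀ a b ≠ none := by
  by_cases h : ∃ b', μ a b' ≠ none
  · obtain ⟨b, hb⟩ := h
    exact ⟨b, by simp only [mu1, Matrix.of_apply, if_pos (⟨b, hb⟩ : ∃ b', μ a b' ≠ none)]; exact hb⟩
  · exact ⟨b₀, by simp only [mu1, Matrix.of_apply, if_neg h]; exact h₀⟩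

lemma colOK_b₀ (μ : Matrix (Fin p) (Fin q) (Option G)) {a₀ : Fin p} {b₀ : Fin q}
    (h₀ : μ a₀ b₀ ≠ none) : ∃ a', mu1 μ a₀ a' b₀ ≠ none :=
  ⟨a₀, by rw [mu1_a₀]; exact h₀⟩

lemma mu2_regular (μ : Matrix (Fin p) (Fin q) (Option G)) {a₀ : Fin p} {b₀ : Fin q}
    (h₀ : μ a₀ b₀ ≠ none) : IsRegularSandwich (mu2 μ a₀ b₀) := by
  constructor
  · intro a
    obtain ⟨b, hb⟩ := mu1_row μ h₀ a
    refine ⟨b, ?_⟩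
    simp only [mu2, Matrix.of_apply, if_pos (⟨a, hb⟩ : ∃ a', mu1 μ a₀ a' b ≠ none)]
    exact hb
  · intro b
    by_cases h : ∃ a', mu1 μ a₀ a' b ≠ none
    · obtain ⟨a, ha⟩ := h
      refine ⟨a, ?_⟩
      simp only [mu2, Matrix.of_apply, if_pos (⟨a, ha⟩ : ∃ a', mu1 μ a₀ a' b ≠ none)]
      exact ha
    · refine ⟨a₀, ?_⟩
      simp only [mu2, Matrix.of_apply, if_neg h, mu1_a₀]
      exact h₀

lemma isZeroSimple_of_regular (μ' : Matrix (Fin p) (Fin q) (Option G))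
    (hreg : IsRegularSandwich μ') (a₀ : Fin p) : IsZeroSimpleRees μ' := by
  constructor
  · obtain ⟨b, hb⟩ := hreg.1 a₀
    refine ⟨some (b, 1, a₀), some (b, 1, a₀), ?_⟩
    simp only [reesMul, Option.bind_some, reesProd]
    simp [Option.map_eq_none_iff, hb]
  · intro I hnone hideal
    by_cases hI : I = {none}
    · exact Or.inl hI
    · right
      have hex : ∃ y, y ∈ I ∧ y ≠ none := by
        by_contra hc
        push_neg at hc
        apply hI
        apply Set.eq_singleton_iff_unique_mem.2
        exact ⟨hnone, fun z hz => hc z hz⟩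
      obtain ⟨y, hyI, hy⟩ := hex
      rcases y with - | ⟨j, g, a⟩
      · exact absurd rfl hy
      apply Set.eq_univ_of_forall
      intro z
      rcases z with - | ⟨j', g', a'⟩
      · exact hnone
      · obtain ⟨au, hu⟩ := hreg.2 j
        rcases hmu : μ' au j with - | m
        · exact absurd hmu hu
        obtain ⟨bv, hv⟩ := hreg.1 a
        rcases hnu : μ' a bv with - | n
        · exact absurd hnu hv
        have h1 := (hideal _ hyI (some (j', 1, au))).1
        have h2 := (hideal _ h1 (some (bv, n⁻¹ * (1 * m * g)⁻¹ * g', a'))).2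
        have hgr : 1 * m * g * n * (n⁻¹ * (1 * m * g)⁻¹ * g') = g' := by group
        have heq : reesMul μ' (reesMul μ' (some (j', 1, au)) (some (j, g, a)))
            (some (bv, n⁻¹ * (1 * m * g)⁻¹ * g', a')) = some (j', g', a') := by
          simp only [reesMul, Option.bind_some, reesProd, hmu, Option.map_some, hnu]
          rw [hgr]
        rw [heq] at h2
        exact h2

end Reg

section Phi
open scoped Classical

variable [Fintype G] (K : Type w) [Field K]

noncomputable def NrM (μ : Matrix (Fin p) (Fin q) (Option G)) (a₀ : Fin p) :
    Matrix (Fin p) (Fin p) (MonoidAlgebra K G) :=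
  Matrix.of fun a c => if (¬ ∃ b', μ a b' ≠ none) ∧ c = a₀ then 1 else 0

noncomputable def NcM (μ : Matrix (Fin p) (Fin q) (Option G)) (a₀ : Fin p) (b₀ : Fin q) :
    Matrix (Fin q) (Fin q) (MonoidAlgebra K G) :=
  Matrix.of fun c b => if (¬ ∃ a', mu1 μ a₀ a' b ≠ none) ∧ c = b₀ then 1 else 0

lemma sand_mu1_eq (μ : Matrix (Fin p) (Fin q) (Option G)) (a₀ : Fin p) :
    (1 + NrM K μ a₀) * sand K μ = sand K (mu1 μ a₀) := by
  ext a b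
  rw [Matrix.add_mul, Matrix.one_mul, Matrix.add_apply, Matrix.mul_apply,
    Finset.sum_eq_single a₀]
  · by_cases h : ∃ b', μ a b' ≠ none
    · rw [show NrM K μ a₀ a a₀ = 0 from if_neg (fun hc => hc.1 h)]
      rw [zero_mul, add_zero]
      simp only [sand, mu1, Matrix.of_apply, if_pos h]
    · rw [show NrM K μ a₀ a a₀ = 1 from if_pos ⟨h, rfl⟩, one_mul]
      push_neg at h
      simp only [sand, mu1, Matrix.of_apply, if_neg (by push_neg; exact h : ¬ ∃ b', μ a b' ≠ none),
        h b, Option.elim, zero_add]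
  · intro c _ hc
    rw [show NrM K μ a₀ a c = 0 from if_neg (fun hcc => hc hcc.2), zero_mul]
  · intro hmem
    exact absurd (Finset.mem_univ a₀) hmem

lemma sand_mu2_eq (μ : Matrix (Fin p) (Fin q) (Option G)) (a₀ : Fin p) (b₀ : Fin q) :
    sand K (mu1 μ a₀) * (1 + NcM K μ a₀ b₀) = sand K (mu2 μ a₀ b₀) := by
  ext a b
  rw [Matrix.mul_add, Matrix.mul_one, Matrix.add_apply, Matrix.mul_apply,
    Finset.sum_eq_single b₀]
  · by_cases h : ∃ a', mu1 μ a₀ a' b ≠ none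
    · rw [show NcM K μ a₀ b₀ b₀ b = 0 from if_neg (fun hc => hc.1 h)]
      rw [mul_zero, add_zero]
      simp only [sand, mu2, Matrix.of_apply, if_pos h]
    · rw [show NcM K μ a₀ b₀ b₀ b = 1 from if_pos ⟨h, rfl⟩, mul_one]
      push_neg at h
      simp only [sand, mu2, Matrix.of_apply,
        if_neg (by push_neg; exact h : ¬ ∃ a', mu1 μ a₀ a' b ≠ none), h a, Option.elim, zero_add]
  · intro c _ hc
    rw [show NcM K μ a₀ b₀ c b = 0 from if_neg (fun hcc => hc hcc.2), mul_zero]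
  · intro hmem
    exact absurd (Finset.mem_univ b₀) hmem

lemma NrM_sq (μ : Matrix (Fin p) (Fin q) (Option G)) {a₀ : Fin p} {b₀ : Fin q}
    (h₀ : μ a₀ b₀ ≠ none) : NrM K μ a₀ * NrM K μ a₀ = 0 := by
  ext a c
  rw [Matrix.mul_apply, Matrix.zero_apply, Finset.sum_eq_zero]
  intro d _
  by_cases hd : d = a₀
  · rw [show NrM K μ a₀ d c = 0 from
      if_neg (fun hc => hc.1 ⟨b₀, by rw [hd]; exact h₀⟩), mul_zero]
  · rw [show NrM K μ a₀ a d = 0 from if_neg (fun hc => hd hc.2), zero_mul]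

lemma NcM_sq (μ : Matrix (Fin p) (Fin q) (Option G)) {a₀ : Fin p} {b₀ : Fin q}
    (h₀ : μ a₀ b₀ ≠ none) : NcM K μ a₀ b₀ * NcM K μ a₀ b₀ = 0 := by
  ext a c
  rw [Matrix.mul_apply, Matrix.zero_apply, Finset.sum_eq_zero]
  intro d _
  by_cases hd : d = b₀
  · rw [show NcM K μ a₀ b₀ a d = 0 from
      if_neg (fun hc => hc.1 (by rw [hd]; exact colOK_b₀ μ h₀)), zero_mul]
  · rw [show NcM K μ a₀ b₀ d c = 0 from if_neg (fun hc => hd hc.2), mul_zero]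

lemma inv_of_sq_zero {n : ℕ} (N : Matrix (Fin n) (Fin n) (MonoidAlgebra K G))
    (hN : N * N = 0) : (1 + N) * (1 - N) = 1 ∧ (1 - N) * (1 + N) = 1 := by
  constructor
  · have h : (1 + N) * (1 - N) = 1 - N * N := by noncomm_ring
    rw [h, hN, sub_zero]
  · have h : (1 - N) * (1 + N) = 1 - N * N := by noncomm_ring
    rw [h, hN, sub_zero]

end Phi

section Main
open scoped Classical

variable [Fintype G]

lemma exists_phi (μ : Matrix (Fin p) (Fin q) (Option G)) {a₀ : Fin p} {b₀ : Fin q}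
    (h₀ : μ a₀ b₀ ≠ none) (K : Type w) [Field K] :
    ∃ φ : ((Fin q × G × Fin p) →₀ K) ≃+ ((Fin q × G × Fin p) →₀ K),
      (∀ f g, φ (contractedMul K μ f g) = contractedMul K (mu2 μ a₀ b₀) (φ f) (φ g)) ∧
      (∀ (c : K) f, φ (c • f) = c • φ f) := by
  obtain ⟨hr1, hr2⟩ := inv_of_sq_zero K (NrM K μ a₀) (NrM_sq K μ h₀)
  obtain ⟨hc1, hc2⟩ := inv_of_sq_zero K (NcM K μ a₀ b₀) (NcM_sq K μ h₀)
  set Nr := NrM K μ a₀ with hNr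
  set Nc := NcM K μ a₀ b₀ with hNc
  set A : Matrix (Fin q) (Fin q) (MonoidAlgebra K G) := 1 - Nc with hA
  set B : Matrix (Fin p) (Fin p) (MonoidAlgebra K G) := 1 - Nr with hB
  have hsand : sand K (mu2 μ a₀ b₀) = (1 + Nr) * sand K μ * (1 + Nc) := by
    rw [← sand_mu2_eq, ← sand_mu1_eq]
  have hinj : ∀ u v : (Fin q × G × Fin p) →₀ K, toMat K u = toMat K v → u = v := by
    intro u v h
    rw [← ofMat_toMat K u, h, ofMat_toMat]
  refine ⟨{ toFun := fun f => ofMat K (A * toMat K f * B),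
            invFun := fun f => ofMat K ((1 + Nc) * toMat K f * (1 + Nr)),
            left_inv := ?_, right_inv := ?_, map_add' := ?_ }, ?_, ?_⟩
  · intro f
    simp only [toMat_ofMat]
    rw [show (1 + Nc) * (A * toMat K f * B) * (1 + Nr)
        = ((1 + Nc) * A) * (toMat K f * (B * (1 + Nr))) by simp only [Matrix.mul_assoc]]
    rw [hc1, hr2, Matrix.one_mul, Matrix.mul_one, ofMat_toMat]
  · intro f
    simp only [toMat_ofMat]
    rw [show A * ((1 + Nc) * toMat K f * (1 + Nr)) * B
        = (A * (1 + Nc)) * (toMat K f * ((1 + Nr) * B)) by simp only [Matrix.mul_assoc]]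
    rw [hc2, hr1, Matrix.one_mul, Matrix.mul_one, ofMat_toMat]
  · intro f g
    show ofMat K (A * toMat K (f + g) * B)
        = ofMat K (A * toMat K f * B) + ofMat K (A * toMat K g * B)
    rw [toMat_add, Matrix.mul_add, Matrix.add_mul, ofMat_add]
  · intro f g
    show ofMat K (A * toMat K (contractedMul K μ f g) * B)
        = contractedMul K (mu2 μ a₀ b₀)
            (ofMat K (A * toMat K f * B)) (ofMat K (A * toMat K g * B))
    apply hinj
    rw [toMat_ofMat, toMat_contractedMul, toMat_contractedMul, toMat_ofMat, toMat_ofMat, hsand]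
    simp only [Matrix.mul_assoc]
    rw [show (1 + Nc) * (A * (toMat K g * B)) = toMat K g * B by
      rw [← Matrix.mul_assoc, hc1, Matrix.one_mul]]
    rw [show B * ((1 + Nr) * (sand K μ * (toMat K g * B))) = sand K μ * (toMat K g * B) by
      rw [← Matrix.mul_assoc, hr2, Matrix.one_mul]]
  · intro c f
    show ofMat K (A * toMat K (c • f) * B) = c • ofMat K (A * toMat K f * B)
    rw [toMat_smul, Matrix.mul_smul, Matrix.smul_mul, ofMat_smul]

end Main


/-- **Remark.** Let `μ` be a nonzero `p × q` sandwich matrix over `G⁰ = G ∪ {0}` for a finite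
group `G`.  Then `μ` can be transformed into a regular sandwich matrix `μ'` (every row and
column containing a nonzero entry) such that for every field `k` with `char k ∤ |G|` the
contracted semigroup algebras `k𝒦(G, p, q, μ)` and `k𝒦(G, p, q, μ')` are isomorphic; and
`𝒦(G, p, q, μ')` is a `0`-simple semigroup. -/
theorem rees_sandwich_regularization [Fintype G]
    (μ : Matrix (Fin p) (Fin q) (Option G)) (hμ : ∃ a b, μ a b ≠ none) :
    ∃ μ' : Matrix (Fin p) (Fin q) (Option G),
      IsRegularSandwich μ' ∧
      IsZeroSimpleRees μ' ∧
      ∀ (K : Type w) [Field K], (Fintype.card G : K) ≠ 0 →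
        ∃ φ : ((Fin q × G × Fin p) →₀ K) ≃+ ((Fin q × G × Fin p) →₀ K),
          (∀ f g, φ (contractedMul K μ f g) = contractedMul K μ' (φ f) (φ g)) ∧
          (∀ (c : K) f, φ (c • f) = c • φ f) := by
  obtain ⟨a₀, b₀, h₀⟩ := hμ
  refine ⟨mu2 μ a₀ b₀, mu2_regular μ h₀, isZeroSimple_of_regular _ (mu2_regular μ h₀) a₀, ?_⟩
  intro K _ _
  exact exists_phi μ h₀ K
end
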